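/- arXiv:1710.09177 — 4 statements merged into one kernel-verified Lean document; each statement's English description precedes it below -/
import Mathlib

section
/- Suppose the input X ∈ ℝ^n is subject only to the nonnegativity constraint X_k ≥ 0 a.s. for all k and the average-power constraint ∑_{k=1}^n E[X_k] ≤ E for some E > 0 (no peak-power constraint). Then the capacity satisfies C_{h,σ²}(E) = sup over all laws of a scalar random variable X̄ with X̄ ≥ 0 a.s. and E[X̄] ≤ h_1·E of I(X̄; X̄ + Z), i.e., C_{h,σ²}(E) = C_{1,σ²}(h_1 E), the capacity of the unit-gain SISO channel under average-power constraint h_1 E. -/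
open MeasureTheory ProbabilityTheory Real Filter
open scoped NNReal ENNReal Classical

noncomputable section

/-- Kullback–Leibler divergence (Mathlib's `ProbabilityTheory.klDiv`). -/
def klDiv {α : Type*} [MeasurableSpace α] (μ ν : Measure α) : EReal :=
  if μ ≪ ν ∧ Integrable (llr μ ν) μ then ((∫ x, llr μ ν x ∂μ : ℝ) : EReal) else ⊤

/-- Mutual information of a joint law: KL divergence of the joint law from the
product of its marginals. -/
def mutualInfo {α β : Type*} [MeasurableSpace α] [MeasurableSpace β]
    (joint : Measure (α × β)) : EReal :=
  klDiv joint ((joint.map Prod.fst).prod (joint.map Prod.snd))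

/-- Partial sums `s_k = h_1 + ⋯ + h_k`. -/
def sCum {n : ℕ} (h : Fin n → ℝ) (k : ℕ) : ℝ :=
  ∑ i : Fin n, if i.val < k then h i else 0

/-- Joint law of `(X, Y)` with `Y = hᵀX + Z`, `Z ~ N(0, v)` independent of `X`. -/
def misoJoint {n : ℕ} (h : Fin n → ℝ) (v : ℝ≥0) (μ : Measure (Fin n → ℝ)) :
    Measure ((Fin n → ℝ) × ℝ) :=
  (μ.prod (gaussianReal 0 v)).map (fun p => (p.1, (∑ k, h k * p.1 k) + p.2))

/-- MISO capacity under peak-power constraint `A` and average-power constraint `E`. -/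
def misoCapacity {n : ℕ} (h : Fin n → ℝ) (v : ℝ≥0) (A E : ℝ) : EReal :=
  ⨆ μ ∈ {μ : Measure (Fin n → ℝ) | IsProbabilityMeasure μ ∧
      (∀ k, ∀ᵐ x ∂μ, x k ∈ Set.Icc 0 A) ∧ (∑ k, ∫ x, x k ∂μ) ≤ E},
    mutualInfo (misoJoint h v μ)

/-- MISO capacity under only an average-power constraint `E`. -/
def misoCapacityAvg {n : ℕ} (h : Fin n → ℝ) (v : ℝ≥0) (E : ℝ) : EReal :=
  ⨆ μ ∈ {μ : Measure (Fin n → ℝ) | IsProbabilityMeasure μ ∧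
      (∀ k, ∀ᵐ x ∂μ, 0 ≤ x k) ∧ (∑ k, ∫ x, x k ∂μ) ≤ E},
    mutualInfo (misoJoint h v μ)

/-- Joint law of `(X̄, X̄ + Z)` for the unit-gain SISO channel. -/
def sisoJoint (v : ℝ≥0) (μ : Measure ℝ) : Measure (ℝ × ℝ) :=
  (μ.prod (gaussianReal 0 v)).map (fun p => (p.1, p.1 + p.2))

/-- Unit-gain SISO capacity under peak-power constraint `A` and average-power
constraint `E`. -/
def sisoCapacity (v : ℝ≥0) (A E : ℝ) : EReal :=
  ⨆ μ ∈ {μ : Measure ℝ | IsProbabilityMeasure μ ∧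
      (∀ᵐ x ∂μ, x ∈ Set.Icc 0 A) ∧ (∫ x, x ∂μ) ≤ E},
    mutualInfo (sisoJoint v μ)

/-- Unit-gain SISO capacity under only an average-power constraint `E`. -/
def sisoCapacityAvg (v : ℝ≥0) (E : ℝ) : EReal :=
  ⨆ μ ∈ {μ : Measure ℝ | IsProbabilityMeasure μ ∧
      (∀ᵐ x ∂μ, 0 ≤ x) ∧ (∫ x, x ∂μ) ≤ E},
    mutualInfo (sisoJoint v μ)

/-- The interval `(s_{k-1} A, s_k A]` (with the first one being `[0, s_1 A]`)
corresponding to the event `U = k` (0-indexed: `k ∈ Fin n` stands for `k+1`). -/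
def uInterval {n : ℕ} (h : Fin n → ℝ) (A : ℝ) (k : Fin n) : Set ℝ :=
  if k.val = 0 then Set.Icc 0 (sCum h 1 * A)
  else Set.Ioc (sCum h k.val * A) (sCum h (k.val + 1) * A)

/-- The average input power `∑_k p_k ((E[X̄ | U=k] - A s_{k-1})/h_k + (k-1) A)`
consumed to generate a scalar law of `X̄`. -/
def avgPowerUse {n : ℕ} (h : Fin n → ℝ) (A : ℝ) (μ : Measure ℝ) : ℝ :=
  ∑ k : Fin n,
    (((∫ x in uInterval h A k, x ∂μ) - A * sCum h k.val * (μ (uInterval h A k)).toReal) / h k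
      + (k.val : ℝ) * A * (μ (uInterval h A k)).toReal)

/-- The threshold `α_th`. -/
def alphaTh {n : ℕ} (h : Fin n → ℝ) : ℝ :=
  1 / 2 + (1 / sCum h n) * ∑ k : Fin n, h k * (k.val : ℝ)


end

noncomputable section
namespace MisoAux
variable {α : Type*} [MeasurableSpace α]
/-- Density of the channel output when the "effective scalar input" has law `ρ`. -/
def Q (v : ℝ≥0) (ρ : Measure ℝ) (y : ℝ) : ℝ≥0∞ := ∫⁻ a, gaussianPDF 0 v (y - a) ∂ρ

/-- The log-likelihood ratio function for the scalar channel. -/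
def L (v : ℝ≥0) (ρ : Measure ℝ) (p : ℝ × ℝ) : ℝ :=
  Real.log (gaussianPDFReal 0 v (p.2 - p.1) / (Q v ρ p.2).toReal)

/-- Generalized joint law. -/
def genJoint (v : ℝ≥0) (T : α → ℝ) (μ : Measure α) : Measure (α × ℝ) :=
  (μ.prod (gaussianReal 0 v)).map (fun p => (p.1, T p.1 + p.2))

lemma measurable_Q (v : ℝ≥0) (ρ : Measure ℝ) [SFinite ρ] : Measurable (Q v ρ) := by
  apply Measurable.lintegral_prod_right (f := fun y a => gaussianPDF 0 v (y - a))
  exact (measurable_gaussianPDF 0 v).comp (measurable_fst.sub measurable_snd)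

lemma measurable_L (v : ℝ≥0) (ρ : Measure ℝ) [SFinite ρ] : Measurable (L v ρ) := by
  apply Real.measurable_log.comp
  exact (((measurable_gaussianPDFReal 0 v).comp (measurable_snd.sub measurable_fst)).div
    (((measurable_Q v ρ).comp measurable_snd).ennreal_toReal))

lemma Q_ne_zero {v : ℝ≥0} (hv : v ≠ 0) (ρ : Measure ℝ) [IsProbabilityMeasure ρ] (y : ℝ) :
    Q v ρ y ≠ 0 := by
  have : 0 < Q v ρ y := by
    rw [Q, lintegral_pos_iff_support
      (f := fun a => gaussianPDF 0 v (y - a))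
      ((measurable_gaussianPDF 0 v).comp (measurable_const.sub measurable_id))]
    have : (Function.support fun a => gaussianPDF 0 v (y - a)) = Set.univ := by
      ext a
      simp only [Function.mem_support, Set.mem_univ, iff_true, gaussianPDF]
      simp [ENNReal.ofReal_eq_zero, not_le, gaussianPDFReal_pos _ _ _ hv]
    rw [this]
    simp
  exact this.ne'

lemma gaussianPDF_le (v : ℝ≥0) (t : ℝ) :
    gaussianPDF 0 v t ≤ ENNReal.ofReal (√(2 * π * v))⁻¹ := by
  apply ENNReal.ofReal_le_ofReal
  rw [gaussianPDFReal]
  calc (√(2 * π * v))⁻¹ * rexp (-(t - 0) ^ 2 / (2 * v)) ≤ (√(2 * π * v))⁻¹ * 1 := by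
        apply mul_le_mul_of_nonneg_left _ (by positivity)
        refine Real.exp_le_one_iff.2 ?_
        have : (0:ℝ) ≤ (t - 0)^2 / (2*v) := by positivity
        rw [neg_div]; linarith
    _ = _ := mul_one _

lemma Q_ne_top (v : ℝ≥0) (ρ : Measure ℝ) [IsProbabilityMeasure ρ] (y : ℝ) :
    Q v ρ y ≠ ⊤ := by
  have : Q v ρ y ≤ ENNReal.ofReal (√(2 * π * v))⁻¹ := by
    rw [Q]
    calc ∫⁻ a, gaussianPDF 0 v (y - a) ∂ρ ≤ ∫⁻ _, ENNReal.ofReal (√(2 * π * v))⁻¹ ∂ρ :=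
          lintegral_mono fun a => gaussianPDF_le v _
      _ = ENNReal.ofReal (√(2 * π * v))⁻¹ := by simp
  exact (this.trans_lt ENNReal.ofReal_lt_top).ne

lemma lintegral_shift (f : ℝ → ℝ≥0∞) (hf : Measurable f) (c : ℝ) :
    ∫⁻ z, f (c + z) = ∫⁻ y, f y := by
  conv_rhs => rw [← map_add_left_eq_self (volume : Measure ℝ) c]
  rw [lintegral_map hf (measurable_const_add c)]

lemma genJoint_eq_withDensity {v : ℝ≥0} (hv : v ≠ 0) {T : α → ℝ} (hT : Measurable T)
    (μ : Measure α) [SFinite μ] :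
    genJoint v T μ
      = (μ.prod (volume : Measure ℝ)).withDensity
          (fun p => gaussianPDF 0 v (p.2 - T p.1)) := by
  have hF : Measurable fun p : α × ℝ => gaussianPDF 0 v (p.2 - T p.1) :=
    (measurable_gaussianPDF 0 v).comp (measurable_snd.sub (hT.comp measurable_fst))
  have he : Measurable fun p : α × ℝ => (p.1, T p.1 + p.2) :=
    measurable_fst.prodMk ((hT.comp measurable_fst).add measurable_snd)
  ext A hA
  set G : α × ℝ → ℝ≥0∞ := A.indicator (fun p => gaussianPDF 0 v (p.2 - T p.1)) with hG
  have hGm : Measurable G := hF.indicator hA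
  rw [genJoint, Measure.map_apply he hA, Measure.prod_apply (he hA),
    withDensity_apply _ hA, ← lintegral_indicator hA _, ← hG,
    MeasureTheory.lintegral_prod G hGm.aemeasurable]
  refine lintegral_congr fun x => ?_
  have hset : MeasurableSet {z : ℝ | (x, T x + z) ∈ A} :=
    (measurable_const.prodMk (measurable_const_add (T x))) hA
  have h1 : Prod.mk x ⁻¹' ((fun p : α × ℝ => (p.1, T p.1 + p.2)) ⁻¹' A)
      = {z : ℝ | (x, T x + z) ∈ A} := rfl
  rw [h1, gaussianReal_apply 0 hv, ← lintegral_indicator hset _]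
  have : ∀ z : ℝ, ({z : ℝ | (x, T x + z) ∈ A}).indicator (gaussianPDF 0 v) z
      = G (x, T x + z) := by
    intro z
    rw [hG]
    by_cases hz : (x, T x + z) ∈ A
    · simp only [Set.indicator_apply, hz, Set.mem_setOf_eq, if_true, Set.indicator_of_mem hz]
      simp [add_sub_cancel_left]
    · simp [Set.indicator_apply, hz]
  simp_rw [this]
  exact lintegral_shift (fun y => G (x, y)) (hGm.comp (measurable_const.prodMk measurable_id))
    (T x)

lemma genJoint_map_fst {v : ℝ≥0} {T : α → ℝ} (hT : Measurable T)
    (μ : Measure α) [SFinite μ] :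
    (genJoint v T μ).map Prod.fst = μ := by
  have he : Measurable fun p : α × ℝ => (p.1, T p.1 + p.2) :=
    measurable_fst.prodMk ((hT.comp measurable_fst).add measurable_snd)
  rw [genJoint, Measure.map_map measurable_fst he]
  have : (Prod.fst ∘ fun p : α × ℝ => (p.1, T p.1 + p.2)) = Prod.fst := rfl
  rw [this, Measure.map_fst_prod]
  simp

lemma prod_withDensity_snd {q : ℝ → ℝ≥0∞} (hq : Measurable q)
    (μ : Measure α) [SFinite μ] (ν : Measure ℝ) [SFinite ν]
    (hν : ν = (volume : Measure ℝ).withDensity q) :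
    μ.prod ν = (μ.prod (volume : Measure ℝ)).withDensity (fun p => q p.2) := by
  ext A hA
  rw [Measure.prod_apply hA, withDensity_apply _ hA, ← lintegral_indicator hA _,
    MeasureTheory.lintegral_prod (A.indicator fun p : α × ℝ => q p.2)
      (((show Measurable fun p : α × ℝ => q p.2 from hq.comp measurable_snd)).indicator
        hA).aemeasurable]
  refine lintegral_congr fun x => ?_
  rw [hν, withDensity_apply _ (measurable_prodMk_left hA),
    ← lintegral_indicator (measurable_prodMk_left hA) _]
  refine lintegral_congr fun y => ?_
  by_cases hy : (x, y) ∈ A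
  · simp [Set.indicator_of_mem, hy, Set.indicator_of_mem (show y ∈ Prod.mk x ⁻¹' A from hy)]
  · simp [Set.indicator_of_notMem, hy,
      Set.indicator_of_notMem (show y ∉ Prod.mk x ⁻¹' A from hy)]

lemma genJoint_map_snd {v : ℝ≥0} (hv : v ≠ 0) {T : α → ℝ} (hT : Measurable T)
    (μ : Measure α) [SFinite μ] :
    (genJoint v T μ).map Prod.snd
      = (volume : Measure ℝ).withDensity (Q v (μ.map T)) := by
  have hF : Measurable fun p : α × ℝ => gaussianPDF 0 v (p.2 - T p.1) :=
    (measurable_gaussianPDF 0 v).comp (measurable_snd.sub (hT.comp measurable_fst))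
  ext B hB
  have hpre : MeasurableSet (Prod.snd ⁻¹' B : Set (α × ℝ)) := measurable_snd hB
  rw [Measure.map_apply measurable_snd hB, genJoint_eq_withDensity hv hT μ,
    withDensity_apply _ hpre, ← lintegral_indicator hpre _,
    MeasureTheory.lintegral_prod_symm _ (hF.indicator hpre).aemeasurable,
    withDensity_apply _ hB, ← lintegral_indicator hB _]
  refine lintegral_congr fun y => ?_
  by_cases hy : y ∈ B
  · have h1 : ∀ x : α, (Prod.snd ⁻¹' B).indicator
        (fun p : α × ℝ => gaussianPDF 0 v (p.2 - T p.1)) (x, y)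
        = gaussianPDF 0 v (y - T x) := fun x =>
      Set.indicator_of_mem (show (x, y) ∈ Prod.snd ⁻¹' B from hy) _
    simp_rw [h1]
    rw [Set.indicator_of_mem hy, Q,
      lintegral_map (show Measurable fun a : ℝ => gaussianPDF 0 v (y - a) from
        (measurable_gaussianPDF 0 v).comp (measurable_const.sub measurable_id)) hT]
  · have h1 : ∀ x : α, (Prod.snd ⁻¹' B).indicator
        (fun p : α × ℝ => gaussianPDF 0 v (p.2 - T p.1)) (x, y) = 0 := fun x =>
      Set.indicator_of_notMem (show (x, y) ∉ Prod.snd ⁻¹' B from hy) _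
    simp_rw [h1]
    simp [Set.indicator_of_notMem hy]

lemma genJoint_eq_withDensity_prod {v : ℝ≥0} (hv : v ≠ 0) {T : α → ℝ} (hT : Measurable T)
    (μ : Measure α) [IsProbabilityMeasure μ] {ν : Measure ℝ} [SFinite ν]
    (hν : ν = (volume : Measure ℝ).withDensity (Q v (μ.map T))) :
    genJoint v T μ = (μ.prod ν).withDensity
      (fun p => gaussianPDF 0 v (p.2 - T p.1) / Q v (μ.map T) p.2) := by
  have hmap : IsProbabilityMeasure (μ.map T) := Measure.isProbabilityMeasure_map hT.aemeasurable
  have hQm : Measurable (Q v (μ.map T)) := measurable_Q v (μ.map T)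
  have hF : Measurable fun p : α × ℝ => gaussianPDF 0 v (p.2 - T p.1) :=
    (measurable_gaussianPDF 0 v).comp (measurable_snd.sub (hT.comp measurable_fst))
  have hG : Measurable fun p : α × ℝ =>
      gaussianPDF 0 v (p.2 - T p.1) / Q v (μ.map T) p.2 :=
    hF.div (hQm.comp measurable_snd)
  rw [prod_withDensity_snd hQm μ ν hν,
    ← withDensity_mul _ (show Measurable fun p : α × ℝ => Q v (μ.map T) p.2 from
      hQm.comp measurable_snd) hG,
    genJoint_eq_withDensity hv hT μ]
  congr 1
  funext p
  simp only [Pi.mul_apply]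
  exact (ENNReal.mul_div_cancel (Q_ne_zero hv (μ.map T) p.2) (Q_ne_top v (μ.map T) p.2)).symm

lemma genJoint_ac {v : ℝ≥0} (hv : v ≠ 0) {T : α → ℝ} (hT : Measurable T)
    (μ : Measure α) [IsProbabilityMeasure μ] {ν : Measure ℝ} [SFinite ν]
    (hν : ν = (volume : Measure ℝ).withDensity (Q v (μ.map T))) :
    genJoint v T μ ≪ μ.prod ν := by
  rw [genJoint_eq_withDensity_prod hv hT μ hν]
  exact withDensity_absolutelyContinuous _ _

lemma llr_genJoint {v : ℝ≥0} (hv : v ≠ 0) {T : α → ℝ} (hT : Measurable T)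
    (μ : Measure α) [IsProbabilityMeasure μ] {ν : Measure ℝ} [IsProbabilityMeasure ν]
    (hν : ν = (volume : Measure ℝ).withDensity (Q v (μ.map T))) :
    llr (genJoint v T μ) (μ.prod ν)
      =ᵐ[genJoint v T μ] fun p => L v (μ.map T) (T p.1, p.2) := by
  have hmap : IsProbabilityMeasure (μ.map T) := Measure.isProbabilityMeasure_map hT.aemeasurable
  have hQm : Measurable (Q v (μ.map T)) := measurable_Q v (μ.map T)
  have hF : Measurable fun p : α × ℝ => gaussianPDF 0 v (p.2 - T p.1) :=
    (measurable_gaussianPDF 0 v).comp (measurable_snd.sub (hT.comp measurable_fst))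
  have hG : Measurable fun p : α × ℝ =>
      gaussianPDF 0 v (p.2 - T p.1) / Q v (μ.map T) p.2 :=
    hF.div (hQm.comp measurable_snd)
  have h1 : (genJoint v T μ).rnDeriv (μ.prod ν)
      =ᵐ[μ.prod ν] fun p => gaussianPDF 0 v (p.2 - T p.1) / Q v (μ.map T) p.2 := by
    rw [genJoint_eq_withDensity_prod hv hT μ hν]
    exact Measure.rnDeriv_withDensity _ hG
  have h2 := (genJoint_ac hv hT μ hν).ae_le h1
  filter_upwards [h2] with p hp
  rw [llr_def]
  simp only [hp]
  rw [L, ENNReal.toReal_div, gaussianPDF,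
    ENNReal.toReal_ofReal (gaussianPDFReal_nonneg 0 v _)]

lemma _root_.mutualInfo_genJoint {v : ℝ≥0} (hv : v ≠ 0) {T : α → ℝ} (hT : Measurable T)
    (μ : Measure α) [IsProbabilityMeasure μ] :
    _root_.mutualInfo (genJoint v T μ) =
      if Integrable (fun p => L v (μ.map T) (T p.1, p.2)) (genJoint v T μ)
      then ((∫ p, L v (μ.map T) (T p.1, p.2) ∂(genJoint v T μ) : ℝ) : EReal) else ⊤ := by
  have he : Measurable fun p : α × ℝ => (p.1, T p.1 + p.2) :=
    measurable_fst.prodMk ((hT.comp measurable_fst).add measurable_snd)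
  have hJ : IsProbabilityMeasure (genJoint v T μ) := by
    rw [genJoint]; exact Measure.isProbabilityMeasure_map he.aemeasurable
  have hν : (genJoint v T μ).map Prod.snd
      = (volume : Measure ℝ).withDensity (Q v (μ.map T)) := genJoint_map_snd hv hT μ
  have hνp : IsProbabilityMeasure ((genJoint v T μ).map Prod.snd) :=
    Measure.isProbabilityMeasure_map measurable_snd.aemeasurable
  have hfst : (genJoint v T μ).map Prod.fst = μ := genJoint_map_fst hT μ
  have hac := genJoint_ac hv hT μ hν
  have hllr := llr_genJoint hv hT μ hν
  rw [_root_.mutualInfo, hfst, _root_.klDiv]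
  have hint : Integrable (llr (genJoint v T μ) (μ.prod ((genJoint v T μ).map Prod.snd)))
        (genJoint v T μ)
      ↔ Integrable (fun p => L v (μ.map T) (T p.1, p.2)) (genJoint v T μ) :=
    integrable_congr hllr
  by_cases hI : Integrable (fun p => L v (μ.map T) (T p.1, p.2)) (genJoint v T μ)
  · rw [if_pos ⟨hac, hint.2 hI⟩, if_pos hI, integral_congr_ae hllr]
  · rw [if_neg, if_neg hI]
    rintro ⟨-, h2⟩
    exact hI (hint.1 h2)

lemma genJoint_map_eq {v : ℝ≥0} {T : α → ℝ} (hT : Measurable T)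
    (μ : Measure α) [SFinite μ] :
    (genJoint v T μ).map (fun p : α × ℝ => (T p.1, p.2)) = genJoint v id (μ.map T) := by
  have he : Measurable fun p : α × ℝ => (p.1, T p.1 + p.2) :=
    measurable_fst.prodMk ((hT.comp measurable_fst).add measurable_snd)
  have hΦ : Measurable fun p : α × ℝ => (T p.1, p.2) :=
    (hT.comp measurable_fst).prodMk measurable_snd
  have hE2 : Measurable fun q : ℝ × ℝ => (q.1, q.1 + q.2) :=
    measurable_fst.prodMk (measurable_fst.add measurable_snd)
  have hpm : Measurable (Prod.map T (id : ℝ → ℝ)) := hT.prodMap measurable_id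
  rw [genJoint, Measure.map_map hΦ he]
  have hcomp : ((fun p : α × ℝ => (T p.1, p.2)) ∘ fun p : α × ℝ => (p.1, T p.1 + p.2))
      = (fun q : ℝ × ℝ => (q.1, q.1 + q.2)) ∘ Prod.map T (id : ℝ → ℝ) := rfl
  rw [hcomp, ← Measure.map_map hE2 hpm, ← Measure.map_prod_map _ _ hT measurable_id,
    Measure.map_id]
  rfl

lemma _root_.mutualInfo_genJoint_eq {v : ℝ≥0} (hv : v ≠ 0) {T : α → ℝ} (hT : Measurable T)
    (μ : Measure α) [IsProbabilityMeasure μ] :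
    _root_.mutualInfo (genJoint v T μ) = _root_.mutualInfo (genJoint v id (μ.map T)) := by
  have hmap : IsProbabilityMeasure (μ.map T) := Measure.isProbabilityMeasure_map hT.aemeasurable
  rw [_root_.mutualInfo_genJoint hv hT μ, _root_.mutualInfo_genJoint hv measurable_id (μ.map T)]
  have hid : (μ.map T).map id = μ.map T := Measure.map_id
  rw [hid]
  have hfun : (fun p : ℝ × ℝ => L v (μ.map T) (id p.1, p.2)) = L v (μ.map T) := by
    funext p; rfl
  rw [hfun, ← genJoint_map_eq hT μ]
  have hΦ : Measurable fun p : α × ℝ => (T p.1, p.2) :=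
    (hT.comp measurable_fst).prodMk measurable_snd
  have hLm : AEStronglyMeasurable (L v (μ.map T))
      ((genJoint v T μ).map (fun p : α × ℝ => (T p.1, p.2))) :=
    (measurable_L v (μ.map T)).aestronglyMeasurable
  rw [integrable_map_measure hLm hΦ.aemeasurable, integral_map hΦ.aemeasurable hLm]
  rfl

lemma key_miso {n : ℕ} (h : Fin n → ℝ) {v : ℝ≥0} (hv : v ≠ 0)
    (μ : Measure (Fin n → ℝ)) [IsProbabilityMeasure μ] :
    _root_.mutualInfo (misoJoint h v μ)
      = _root_.mutualInfo (sisoJoint v (μ.map (fun x => ∑ k, h k * x k))) := by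
  have hT : Measurable fun x : Fin n → ℝ => ∑ k, h k * x k :=
    Finset.measurable_sum _ fun k _ => (measurable_pi_apply k).const_mul _
  exact mutualInfo_genJoint_eq hv hT μ

end MisoAux

end

theorem miso_capacity_avg_only (n : ℕ) (hn : 2 ≤ n) (h : Fin n → ℝ)
    (hord : ∀ i j : Fin n, i ≤ j → h j ≤ h i) (hpos : ∀ k, 0 < h k)
    (v : ℝ≥0) (hv : 0 < v)
    (E : ℝ) (hE : 0 < E) :
    misoCapacityAvg h v E = sisoCapacityAvg v (h ⟨0, by omega⟩ * E) := by
  classical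
  have hvne : v ≠ 0 := hv.ne'
  set k₀ : Fin n := ⟨0, by omega⟩ with hk₀
  have h₀pos : 0 < h k₀ := hpos k₀
  have hT : Measurable fun x : Fin n → ℝ => ∑ k, h k * x k :=
    Finset.measurable_sum _ fun k _ => (measurable_pi_apply k).const_mul _
  rw [misoCapacityAvg, sisoCapacityAvg]
  apply le_antisymm
  · refine iSup₂_le fun μ hμ => ?_
    obtain ⟨hμp, hμnn, hμE⟩ := hμ
    haveI := hμp
    rw [MisoAux.key_miso h hvne μ]
    have hnnall : ∀ᵐ x ∂μ, ∀ k, 0 ≤ x k := (ae_all_iff).2 hμnn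
    refine le_iSup₂_of_le (μ.map (fun x => ∑ k, h k * x k))
      ⟨Measure.isProbabilityMeasure_map hT.aemeasurable, ?_, ?_⟩ le_rfl
    · rw [ae_map_iff hT.aemeasurable (measurableSet_Ici (a := (0:ℝ)))]
      filter_upwards [hnnall] with x hx
      exact Finset.sum_nonneg fun k _ => mul_nonneg (hpos k).le (hx k)
    · have hid : ∫ a, a ∂(μ.map (fun x => ∑ k, h k * x k))
          = ∫ x, (∑ k, h k * x k) ∂μ :=
        integral_map hT.aemeasurable aestronglyMeasurable_id
      rw [hid]
      by_cases hint : Integrable (fun x => ∑ k, h k * x k) μ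
      · have hik : ∀ k : Fin n, Integrable (fun x => x k) μ := by
          intro k
          refine Integrable.mono' (hint.const_mul (h k)⁻¹)
            (measurable_pi_apply k).aestronglyMeasurable ?_
          filter_upwards [hnnall] with x hx
          rw [Real.norm_eq_abs, abs_of_nonneg (hx k), inv_mul_eq_div,
            le_div_iff₀ (hpos k)]
          calc x k * h k = h k * x k := mul_comm _ _
            _ ≤ ∑ j, h j * x j :=
              Finset.single_le_sum (f := fun j => h j * x j)
                (fun j _ => mul_nonneg (hpos j).le (hx j)) (Finset.mem_univ k)
        have hsum : ∫ x, (∑ k, h k * x k) ∂μ = ∑ k, h k * ∫ x, x k ∂μ := by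
          rw [integral_finset_sum _ fun k _ => (hik k).const_mul (h k)]
          exact Finset.sum_congr rfl fun k _ => integral_const_mul _ _
        rw [hsum]
        have hknn : ∀ k : Fin n, 0 ≤ ∫ x, x k ∂μ :=
          fun k => integral_nonneg_of_ae (hμnn k)
        have hle : ∀ k : Fin n, h k ≤ h k₀ := fun k => hord k₀ k (by simp [hk₀, Fin.le_def])
        calc ∑ k, h k * ∫ x, x k ∂μ ≤ ∑ k, h k₀ * ∫ x, x k ∂μ :=
              Finset.sum_le_sum fun k _ => mul_le_mul_of_nonneg_right (hle k) (hknn k)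
          _ = h k₀ * ∑ k, ∫ x, x k ∂μ := (Finset.mul_sum _ _ _).symm
          _ ≤ h k₀ * E := mul_le_mul_of_nonneg_left hμE h₀pos.le
      · rw [integral_undef hint]
        positivity
  · refine iSup₂_le fun ρ hρ => ?_
    obtain ⟨hρp, hρnn, hρE⟩ := hρ
    haveI := hρp
    set ι : ℝ → (Fin n → ℝ) := fun a k => if k = k₀ then a / h k₀ else 0 with hι
    have hιm : Measurable ι := by
      apply measurable_pi_lambda
      intro k
      by_cases hk : k = k₀
      · simpa [hι, hk] using measurable_id.div_const (h k₀)
      · simpa [hι, hk] using measurable_const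
    haveI : IsProbabilityMeasure (ρ.map ι) := Measure.isProbabilityMeasure_map hιm.aemeasurable
    have hmapT : (ρ.map ι).map (fun x => ∑ k, h k * x k) = ρ := by
      rw [Measure.map_map hT hιm]
      have hcomp : ((fun x : Fin n → ℝ => ∑ k, h k * x k) ∘ ι) = id := by
        funext a
        simp only [Function.comp_apply, hι, mul_ite, mul_zero, Finset.sum_ite_eq',
          Finset.mem_univ, if_true, id_eq]
        field_simp
      rw [hcomp, Measure.map_id]
    have hmi : _root_.mutualInfo (sisoJoint v ρ)
        = _root_.mutualInfo (misoJoint h v (ρ.map ι)) := by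
      rw [MisoAux.key_miso h hvne (ρ.map ι), hmapT]
    rw [hmi]
    refine le_iSup₂_of_le (ρ.map ι) ⟨inferInstance, ?_, ?_⟩ le_rfl
    · intro k
      rw [ae_map_iff (p := fun x : Fin n → ℝ => 0 ≤ x k) hιm.aemeasurable
        (show MeasurableSet {x : Fin n → ℝ | 0 ≤ x k} from
          (measurable_pi_apply k) (measurableSet_Ici (a := (0:ℝ))))]
      filter_upwards [hρnn] with a ha
      by_cases hk : k = k₀
      · simp only [hι, hk, if_true]
        positivity
      · simp [hι, hk]
    · have hcoord : ∀ k : Fin n,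
          ∫ x, x k ∂(ρ.map ι) = if k = k₀ then (∫ a, a ∂ρ) / h k₀ else 0 := by
        intro k
        rw [integral_map hιm.aemeasurable (measurable_pi_apply k).aestronglyMeasurable]
        by_cases hk : k = k₀
        · simp only [hι, hk, if_true]
          exact integral_div _ _
        · simp [hι, hk]
      rw [Finset.sum_congr rfl fun k _ => hcoord k,
        Finset.sum_ite_eq' Finset.univ k₀ (fun _ => (∫ a, a ∂ρ) / h k₀)]
      simp only [Finset.mem_univ, if_true]
      rw [div_le_iff₀ h₀pos]
      calc ∫ a, a ∂ρ ≤ h k₀ * E := hρE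
        _ = E * h k₀ := mul_comm _ _
end

section
/- Without loss of optimality, the supremum defining C_{h,σ²}(A, E) may be restricted to laws of X satisfying, for every k ∈ {1,…,n}, with probability one: if X_k > 0 then X_1 = X_2 = … = X_{k−1} = A. That is, the supremum of I(X;Y) over all admissible laws equals the supremum over admissible laws with this additional structural property. -/
open MeasureTheory ProbabilityTheory Real Filter
open scoped NNReal ENNReal Classical

noncomputable section
namespace MisoAux


variable {n : ℕ}

/-- the linear combination `h·x`. -/
def lin (h : Fin n → ℝ) (x : Fin n → ℝ) : ℝ := ∑ k, h k * x k

/-- the energy-efficient inverse map. -/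
def ee (h : Fin n → ℝ) (A : ℝ) (t : ℝ) : Fin n → ℝ := fun k =>
  (min (max t (sCum h k.val * A)) (sCum h (k.val + 1) * A) - sCum h k.val * A) / h k

lemma sCum_zero (h : Fin n → ℝ) : sCum h 0 = 0 := by simp [sCum]

lemma sCum_succ (h : Fin n → ℝ) (k : Fin n) :
    sCum h (k.val + 1) = sCum h k.val + h k := by
  have : ∀ i : Fin n, (if i.val < k.val + 1 then h i else 0)
      = (if i.val < k.val then h i else 0) + (if i = k then h i else 0) := by
    intro i
    by_cases hik : i = k
    · subst hik; simp
    · have hne : i.val ≠ k.val := fun e => hik (Fin.ext e)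
      have he : (i.val < k.val + 1) = (i.val < k.val) := propext (by omega)
      simp [hik, he]
  simp only [sCum, this, Finset.sum_add_distrib]
  congr 1
  simp

lemma sCum_mono (h : Fin n → ℝ) (hpos : ∀ k, 0 < h k) : Monotone (sCum h) := by
  intro a b hab
  refine Finset.sum_le_sum fun i _ => ?_
  rcases lt_or_ge i.val a with hi | hi
  · simp [hi, hi.trans_le hab]
  · rcases lt_or_ge i.val b with hj | hj
    · simp [not_lt.2 hi, hj, (hpos i).le]
    · simp [not_lt.2 hi, not_lt.2 hj]

lemma sCum_nonneg (h : Fin n → ℝ) (hpos : ∀ k, 0 < h k) (k : ℕ) : 0 ≤ sCum h k := by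
  simpa [sCum_zero] using sCum_mono h hpos (Nat.zero_le k)

lemma sCum_top (h : Fin n → ℝ) : sCum h n = ∑ k, h k := by
  simp [sCum, Fin.is_lt]

variable {h : Fin n → ℝ} {A : ℝ}

lemma ee_mem (hpos : ∀ k, 0 < h k) (hA : 0 < A) (t : ℝ) (k : Fin n) :
    ee h A t k ∈ Set.Icc 0 A := by
  have hsucc := sCum_succ h k
  set a := sCum h k.val * A with ha
  set b := sCum h (k.val + 1) * A with hb
  have hab : b = a + h k * A := by rw [hb, hsucc]; ring
  have h1 : a ≤ min (max t a) b :=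
    le_min (le_max_right _ _) (by nlinarith [(hpos k).le, hA.le])
  have h2 : min (max t a) b ≤ b := min_le_right _ _
  constructor
  · exact div_nonneg (by linarith) (hpos k).le
  · rw [ee, div_le_iff₀ (hpos k)]
    nlinarith

lemma mul_ee (hpos : ∀ k, 0 < h k) (hA : 0 < A) {t : ℝ} (ht0 : 0 ≤ t) (k : Fin n) :
    h k * ee h A t k = min t (sCum h (k.val + 1) * A) - min t (sCum h k.val * A) := by
  have hab : sCum h k.val * A ≤ sCum h (k.val + 1) * A :=
    mul_le_mul_of_nonneg_right (sCum_mono h hpos (Nat.le_succ _)) hA.le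
  rw [ee, mul_div_cancel₀ _ (hpos k).ne']
  rcases le_total t (sCum h k.val * A) with hta | hta
  · rw [max_eq_right hta, min_eq_left hab, min_eq_left hta, min_eq_left (hta.trans hab)]
    ring
  · rw [max_eq_left hta, min_eq_right hta]

lemma lin_ee (hpos : ∀ k, 0 < h k) (hA : 0 < A) {t : ℝ}
    (ht0 : 0 ≤ t) (ht1 : t ≤ sCum h n * A) : lin h (ee h A t) = t := by
  have : ∀ k : Fin n, h k * ee h A t k
      = (fun j => min t (sCum h j * A)) (k.val + 1) - (fun j => min t (sCum h j * A)) k.val :=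
    fun k => mul_ee hpos hA ht0 k
  rw [lin]
  simp only [this]
  rw [Fin.sum_univ_eq_sum_range (fun j => (fun j => min t (sCum h j * A)) (j + 1)
    - (fun j => min t (sCum h j * A)) j) n]
  rw [Finset.sum_range_sub (fun j => min t (sCum h j * A)) n]
  simp only [sCum_zero, zero_mul]
  rw [min_eq_left ht1, min_eq_right ht0, sub_zero]

lemma ee_pos_gt (hpos : ∀ k, 0 < h k) (hA : 0 < A) {t : ℝ} {k : Fin n}
    (hk : 0 < ee h A t k) : sCum h k.val * A < t := by
  by_contra hta
  push_neg at hta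
  have hab : sCum h k.val * A ≤ sCum h (k.val + 1) * A :=
    mul_le_mul_of_nonneg_right (sCum_mono h hpos (Nat.le_succ _)) hA.le
  rw [ee, max_eq_right hta, min_eq_left hab, sub_self, zero_div] at hk
  exact lt_irrefl _ hk

lemma ee_eq_A (hpos : ∀ k, 0 < h k) (hA : 0 < A) {t : ℝ} {k : Fin n}
    (hk : sCum h (k.val + 1) * A ≤ t) : ee h A t k = A := by
  have hab : sCum h k.val * A ≤ sCum h (k.val + 1) * A :=
    mul_le_mul_of_nonneg_right (sCum_mono h hpos (Nat.le_succ _)) hA.le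
  rw [ee, max_eq_left (hab.trans hk), min_eq_right hk, sCum_succ h k,
    div_eq_iff (hpos k).ne']
  ring

lemma ee_struct (hpos : ∀ k, 0 < h k) (hA : 0 < A) (t : ℝ) (k : Fin n)
    (hk : 0 < ee h A t k) (j : Fin n) (hj : j < k) : ee h A t j = A := by
  refine ee_eq_A hpos hA ?_
  have h1 : sCum h (j.val + 1) * A ≤ sCum h k.val * A :=
    mul_le_mul_of_nonneg_right (sCum_mono h hpos (by omega : j.val + 1 ≤ k.val)) hA.le
  exact h1.trans (ee_pos_gt hpos hA hk).le

lemma lin_mem (hpos : ∀ k, 0 < h k) (hA : 0 < A) {x : Fin n → ℝ}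
    (hx : ∀ k, x k ∈ Set.Icc 0 A) : lin h x ∈ Set.Icc 0 (sCum h n * A) := by
  constructor
  · exact Finset.sum_nonneg fun k _ => mul_nonneg (hpos k).le (hx k).1
  · rw [sCum_top, Finset.sum_mul]
    exact Finset.sum_le_sum fun k _ => mul_le_mul_of_nonneg_left (hx k).2 (hpos k).le

lemma sum_ee_le (hn : 0 < n) (hord : ∀ i j : Fin n, i ≤ j → h j ≤ h i)
    (hpos : ∀ k, 0 < h k) (hA : 0 < A) {x : Fin n → ℝ}
    (hx : ∀ k, x k ∈ Set.Icc 0 A) :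
    ∑ k, ee h A (lin h x) k ≤ ∑ k, x k := by
  set t := lin h x with hT
  obtain ⟨ht0, ht1⟩ := lin_mem hpos hA hx
  set y := ee h A t with hy
  have hgy : lin h y = t := lin_ee hpos hA ht0 ht1
  set m := (Finset.univ.filter fun k : Fin n => sCum h (k.val + 1) * A ≤ t).card with hm
  -- claim2 : m ≤ k → t < s_{k+1} A
  have claim2 : ∀ k : Fin n, m ≤ k.val → t < sCum h (k.val + 1) * A := by
    intro k hk
    by_contra hc
    push_neg at hc
    have hsub : Finset.Iic k ⊆
        Finset.univ.filter fun j : Fin n => sCum h (j.val + 1) * A ≤ t := by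
      intro j hj
      simp only [Finset.mem_Iic] at hj
      refine Finset.mem_filter.2 ⟨Finset.mem_univ _, le_trans ?_ hc⟩
      exact mul_le_mul_of_nonneg_right (sCum_mono h hpos (by omega : j.val + 1 ≤ k.val + 1)) hA.le
    have := Finset.card_le_card hsub
    rw [Fin.card_Iic] at this
    omega
  have claim1 : ∀ k : Fin n, k.val < m → sCum h (k.val + 1) * A ≤ t := by
    intro k hk
    by_contra hc
    push_neg at hc
    have hsub : (Finset.univ.filter fun j : Fin n => sCum h (j.val + 1) * A ≤ t) ⊆
        Finset.Iio k := by
      intro j hj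
      simp only [Finset.mem_filter] at hj
      simp only [Finset.mem_Iio]
      by_contra hjk
      push_neg at hjk
      exact absurd (le_trans (mul_le_mul_of_nonneg_right
        (sCum_mono h hpos (by omega : k.val + 1 ≤ j.val + 1)) hA.le) hj.2) (not_le.2 hc)
    have := Finset.card_le_card hsub
    rw [Fin.card_Iio] at this
    omega
  have yA : ∀ k : Fin n, k.val < m → y k = A := fun k hk => ee_eq_A hpos hA (claim1 k hk)
  have y0 : ∀ k : Fin n, m < k.val → y k = 0 := by
    intro k hk
    have hk1 : 1 ≤ k.val := by omega
    have hkk : k.val - 1 < n := by omega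
    have := claim2 ⟨k.val - 1, hkk⟩ (by simpa using (by omega : m ≤ k.val - 1))
    simp only at this
    rw [(by omega : k.val - 1 + 1 = k.val)] at this
    by_contra hy0
    have hpos' : 0 < y k := lt_of_le_of_ne (ee_mem hpos hA t k).1 (Ne.symm hy0)
    exact absurd (ee_pos_gt hpos hA hpos') (not_lt.2 this.le)
  set c : ℝ := if hmn : m < n then h ⟨m, hmn⟩ else h ⟨n - 1, by omega⟩ with hc
  have hcpos : 0 < c := by
    rw [hc]; split <;> exact hpos _
  have key : ∀ k : Fin n, c * (y k - x k) ≤ h k * (y k - x k) := by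
    intro k
    rcases lt_trichotomy k.val m with hkm | hkm | hkm
    · have hyk : 0 ≤ y k - x k := by
        rw [yA k hkm]; linarith [(hx k).2]
      have hch : c ≤ h k := by
        rw [hc]; split
        · exact hord k ⟨m, ‹m < n›⟩ (by simpa [Fin.le_def] using hkm.le)
        · exact hord k ⟨n - 1, by omega⟩ (by simp [Fin.le_def]; omega)
      exact mul_le_mul_of_nonneg_right hch hyk
    · have hmn : m < n := hkm ▸ k.isLt
      have : c = h k := by
        rw [hc, dif_pos hmn]
        congr 1
        exact Fin.ext hkm.symm
      rw [this]
    · have hyk : y k - x k ≤ 0 := by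
        rw [y0 k hkm]; linarith [(hx k).1]
      have hmn : m < n := by omega
      have hch : h k ≤ c := by
        rw [hc, dif_pos hmn]
        exact hord ⟨m, hmn⟩ k (by simpa [Fin.le_def] using hkm.le)
      exact mul_le_mul_of_nonpos_right hch hyk
  have hsum : c * (∑ k, y k - ∑ k, x k) ≤ 0 := by
    have h1 : c * (∑ k, y k - ∑ k, x k) = ∑ k, c * (y k - x k) := by
      rw [← Finset.sum_sub_distrib, Finset.mul_sum]
    have h2 : (∑ k, h k * (y k - x k)) = lin h y - lin h x := by
      simp only [mul_sub, Finset.sum_sub_distrib, lin]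
    calc c * (∑ k, y k - ∑ k, x k) = ∑ k, c * (y k - x k) := h1
      _ ≤ ∑ k, h k * (y k - x k) := Finset.sum_le_sum fun k _ => key k
      _ = lin h y - lin h x := h2
      _ = 0 := by rw [hgy, hT]; ring
  nlinarith

end MisoAux
end

noncomputable section
namespace MisoAux


/-- law of `X̄ + Z`. -/
def nuLY (v : ℝ≥0) (ν : Measure ℝ) : Measure ℝ :=
  (ν.prod (gaussianReal 0 v)).map (fun p => p.1 + p.2)

/-- density of the joint law wrt the product of marginals, on the `X̄` level. -/
def wFun (v : ℝ≥0) (ν : Measure ℝ) : ℝ × ℝ → ℝ≥0∞ :=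
  (sisoJoint v ν).rnDeriv (ν.prod (nuLY v ν))

def ellFun (v : ℝ≥0) (ν : Measure ℝ) : ℝ × ℝ → ℝ :=
  fun q => Real.log (wFun v ν q).toReal

variable {v : ℝ≥0} {ν : Measure ℝ}

lemma measurable_wFun (v : ℝ≥0) (ν : Measure ℝ) : Measurable (wFun v ν) :=
  Measure.measurable_rnDeriv _ _

lemma measurable_ellFun (v : ℝ≥0) (ν : Measure ℝ) : Measurable (ellFun v ν) :=
  (measurable_wFun v ν).ennreal_toReal.log

instance (v : ℝ≥0) (ν : Measure ℝ) [IsProbabilityMeasure ν] :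
    IsProbabilityMeasure (nuLY v ν) :=
  Measure.isProbabilityMeasure_map (measurable_add.comp measurable_id).aemeasurable

instance (v : ℝ≥0) (ν : Measure ℝ) [IsProbabilityMeasure ν] :
    IsProbabilityMeasure (sisoJoint v ν) :=
  Measure.isProbabilityMeasure_map (measurable_fst.prodMk measurable_add).aemeasurable

/-- measurability of `t ↦ gaussianReal t v B`. -/
lemma measurable_gauss_apply (v : ℝ≥0) {B : Set ℝ} (hB : MeasurableSet B) :
    Measurable fun t : ℝ => gaussianReal t v B := by
  have key : ∀ t : ℝ, gaussianReal t v B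
      = (gaussianReal 0 v) (Prod.mk t ⁻¹' ((fun p : ℝ × ℝ => p.1 + p.2) ⁻¹' B)) := by
    intro t
    have h1 : (gaussianReal 0 v).map (fun z => t + z) = gaussianReal t v := by
      simpa using gaussianReal_map_const_add (μ := 0) (v := v) t
    rw [← h1, Measure.map_apply (measurable_const_add t) hB]
    rfl
  simp only [key]
  exact measurable_measure_prodMk_left (measurable_add hB)

section Joint

variable {α : Type*} [MeasurableSpace α] (μ : Measure α) [SFinite μ]
  {G : α → ℝ}

lemma measurable_T (hG : Measurable G) :
    Measurable fun p : α × ℝ => (p.1, G p.1 + p.2) :=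
  measurable_fst.prodMk ((hG.comp measurable_fst).add measurable_snd)

/-- value of the joint distribution on a general set. -/
lemma joint_apply (hG : Measurable G) {N : Set (α × ℝ)} (hN : MeasurableSet N) :
    (μ.prod (gaussianReal 0 v)).map (fun p : α × ℝ => (p.1, G p.1 + p.2)) N
      = ∫⁻ x, gaussianReal (G x) v {y | (x, y) ∈ N} ∂μ := by
  rw [Measure.map_apply (measurable_T hG) hN, Measure.prod_apply ((measurable_T hG) hN)]
  refine lintegral_congr fun x => ?_
  have hNx : MeasurableSet {y : ℝ | (x, y) ∈ N} := measurable_prodMk_left hN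
  have h1 : (gaussianReal 0 v).map (fun z => G x + z) = gaussianReal (G x) v := by
    simpa using gaussianReal_map_const_add (μ := 0) (v := v) (G x)
  rw [← h1, Measure.map_apply (measurable_const_add (G x)) hNx]
  rfl

/-- value of the joint distribution on a rectangle. -/
lemma joint_rect (hG : Measurable G) {S : Set α} {B : Set ℝ} (hS : MeasurableSet S) (hB : MeasurableSet B) :
    (μ.prod (gaussianReal 0 v)).map (fun p : α × ℝ => (p.1, G p.1 + p.2)) (S ×ˢ B)
      = ∫⁻ x in S, gaussianReal (G x) v B ∂μ := by
  rw [joint_apply μ hG (hS.prod hB)]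
  calc ∫⁻ x, gaussianReal (G x) v {y | (x, y) ∈ S ×ˢ B} ∂μ
      = ∫⁻ x, S.indicator (fun x => gaussianReal (G x) v B) x ∂μ := by
        refine lintegral_congr fun x => ?_
        by_cases hx : x ∈ S <;> simp [hx]
    _ = ∫⁻ x in S, gaussianReal (G x) v B ∂μ := lintegral_indicator hS _

lemma joint_map_fst (hG : Measurable G) :
    ((μ.prod (gaussianReal 0 v)).map (fun p : α × ℝ => (p.1, G p.1 + p.2))).map Prod.fst
      = μ := by
  rw [Measure.map_map measurable_fst (measurable_T hG)]
  have : (Prod.fst ∘ fun p : α × ℝ => (p.1, G p.1 + p.2)) = Prod.fst := rfl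
  rw [this, Measure.map_fst_prod]
  simp

lemma joint_map_snd (hG : Measurable G) (hmap : μ.map G = ν) [SFinite ν] :
    ((μ.prod (gaussianReal 0 v)).map (fun p : α × ℝ => (p.1, G p.1 + p.2))).map Prod.snd
      = nuLY v ν := by
  rw [Measure.map_map measurable_snd (measurable_T hG)]
  have h1 : (Prod.snd ∘ fun p : α × ℝ => (p.1, G p.1 + p.2))
      = (fun q : ℝ × ℝ => q.1 + q.2) ∘ (Prod.map G id) := rfl
  rw [h1, ← Measure.map_map measurable_add (hG.prodMap measurable_id), ← Measure.map_prod_map _ _ hG measurable_id,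
    hmap, Measure.map_id]
  rfl

lemma joint_map_pair (hG : Measurable G) (hmap : μ.map G = ν) [SFinite ν] :
    ((μ.prod (gaussianReal 0 v)).map (fun p : α × ℝ => (p.1, G p.1 + p.2))).map
        (fun p : α × ℝ => (G p.1, p.2))
      = sisoJoint v ν := by
  have hm : Measurable fun p : α × ℝ => (G p.1, p.2) :=
    (hG.comp measurable_fst).prodMk measurable_snd
  rw [Measure.map_map hm (measurable_T hG)]
  have h1 : ((fun p : α × ℝ => (G p.1, p.2)) ∘ fun p : α × ℝ => (p.1, G p.1 + p.2))
      = (fun q : ℝ × ℝ => (q.1, q.1 + q.2)) ∘ (Prod.map G id) := rfl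
  rw [h1, ← Measure.map_map (measurable_fst.prodMk measurable_add) (hG.prodMap measurable_id),
    ← Measure.map_prod_map _ _ hG measurable_id, hmap, Measure.map_id]
  rfl

end Joint

section Disint

variable {v : ℝ≥0} {ν : Measure ℝ} [IsProbabilityMeasure ν]

lemma nuLY_apply (hv : v ≠ 0) {B : Set ℝ} (hB : MeasurableSet B) :
    nuLY v ν B = ∫⁻ t, gaussianReal t v B ∂ν := by
  have h1 : nuLY v ν = ((ν.prod (gaussianReal 0 v)).map
      (fun p : ℝ × ℝ => (p.1, id p.1 + p.2))).map Prod.snd := by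
    rw [joint_map_snd ν measurable_id (Measure.map_id)]
  rw [h1, Measure.map_map measurable_snd (measurable_T measurable_id)]
  have h2 : (Prod.snd ∘ fun p : ℝ × ℝ => (p.1, id p.1 + p.2)) = fun p : ℝ × ℝ => p.1 + p.2 := rfl
  rw [h2, Measure.map_apply measurable_add hB, Measure.prod_apply (measurable_add hB)]
  refine lintegral_congr fun t => ?_
  have h3 : (gaussianReal 0 v).map (fun z => t + z) = gaussianReal t v := by
    simpa using gaussianReal_map_const_add (μ := 0) (v := v) t
  rw [← h3, Measure.map_apply (measurable_const_add t) hB]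
  rfl

lemma gauss_null (hv : v ≠ 0) {B : Set ℝ} (hB : MeasurableSet B)
    (h0 : nuLY v ν B = 0) (t : ℝ) : gaussianReal t v B = 0 := by
  rw [nuLY_apply hv hB] at h0
  rw [lintegral_eq_zero_iff (measurable_gauss_apply v hB)] at h0
  have hne : (ν : Measure ℝ) ≠ 0 := IsProbabilityMeasure.ne_zero ν
  haveI : NeZero ν := ⟨hne⟩
  obtain ⟨s, hs⟩ := h0.exists
  have hvol : (volume : Measure ℝ) B = 0 := gaussianReal_absolutelyContinuous' s hv hs
  exact gaussianReal_absolutelyContinuous t hv hvol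

lemma siso_ac (hv : v ≠ 0) : sisoJoint v ν ≪ ν.prod (nuLY v ν) := by
  refine Measure.AbsolutelyContinuous.mk fun N hN h0 => ?_
  rw [Measure.measure_prod_null hN] at h0
  have h1 : sisoJoint v ν N = ∫⁻ t, gaussianReal t v {y | (t, y) ∈ N} ∂ν := by
    have : sisoJoint v ν = (ν.prod (gaussianReal 0 v)).map
        (fun p : ℝ × ℝ => (p.1, id p.1 + p.2)) := rfl
    rw [this, joint_apply ν measurable_id hN]
    simp only [id_eq]
  rw [h1, ← lintegral_zero (μ := ν)]
  refine lintegral_congr_ae ?_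
  filter_upwards [h0] with t ht
  exact gauss_null hv (measurable_prodMk_left hN) ht t

lemma siso_withDensity (hv : v ≠ 0) :
    (ν.prod (nuLY v ν)).withDensity (wFun v ν) = sisoJoint v ν :=
  Measure.withDensity_rnDeriv_eq _ _ (siso_ac hv)

/-- a.e. `t`, the Gaussian kernel at `t` equals the density-reweighted `Y` law. -/
lemma ae_gauss_eq (hv : v ≠ 0) :
    ∀ᵐ t ∂ν, gaussianReal t v = (nuLY v ν).withDensity (fun y => wFun v ν (t, y)) := by
  have step1 : ∀ {B : Set ℝ}, MeasurableSet B →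
      (fun t => gaussianReal t v B) =ᵐ[ν]
        (fun t => ∫⁻ y in B, wFun v ν (t, y) ∂(nuLY v ν)) := by
    intro B hB
    refine ae_eq_of_forall_setLIntegral_eq_of_sigmaFinite
      (measurable_gauss_apply v hB)
      ((measurable_wFun v ν).lintegral_prod_right') (fun C hC _ => ?_)
    have h1 : ∫⁻ t in C, gaussianReal t v B ∂ν = sisoJoint v ν (C ×ˢ B) := by
      have : sisoJoint v ν = (ν.prod (gaussianReal 0 v)).map
          (fun p : ℝ × ℝ => (p.1, id p.1 + p.2)) := rfl
      rw [this, joint_rect ν measurable_id hC hB]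
      simp only [id_eq]
    have h2 : sisoJoint v ν (C ×ˢ B)
        = ∫⁻ t in C, ∫⁻ y in B, wFun v ν (t, y) ∂(nuLY v ν) ∂ν := by
      rw [← siso_withDensity hv, withDensity_apply _ (hC.prod hB),
        ← Measure.prod_restrict, lintegral_prod _ (measurable_wFun v ν).aemeasurable]
    rw [h1, h2]
  have stepQ : ∀ᵐ t ∂ν, (∀ q : ℚ, gaussianReal t v (Set.Iio (q : ℝ))
        = ∫⁻ y in Set.Iio (q : ℝ), wFun v ν (t, y) ∂(nuLY v ν))
      ∧ gaussianReal t v Set.univ = ∫⁻ y, wFun v ν (t, y) ∂(nuLY v ν) := by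
    refine ((ae_all_iff).2 fun q : ℚ => step1 measurableSet_Iio).and ?_
    simpa [Filter.EventuallyEq] using step1 MeasurableSet.univ
  filter_upwards [stepQ] with t ⟨hq, huniv⟩
  have hW : ∀ {B : Set ℝ}, MeasurableSet B →
      ((nuLY v ν).withDensity (fun y => wFun v ν (t, y))) B
        = ∫⁻ y in B, wFun v ν (t, y) ∂(nuLY v ν) := fun hB =>
    withDensity_apply _ hB
  refine ext_of_generate_finite (⋃ a : ℚ, {Set.Iio (a : ℝ)}) ?_ isPiSystem_Iio_rat ?_ ?_
  · rw [BorelSpace.measurable_eq (α := ℝ)]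
    exact borel_eq_generateFrom_Iio_rat
  · rintro s hs
    simp only [Set.mem_iUnion, Set.mem_singleton_iff] at hs
    obtain ⟨q, rfl⟩ := hs
    rw [hW measurableSet_Iio]
    exact hq q
  · rw [hW MeasurableSet.univ, setLIntegral_univ]
    exact huniv

end Disint

section Main

variable {v : ℝ≥0} {ν : Measure ℝ} [IsProbabilityMeasure ν]
variable {α : Type*} [MeasurableSpace α] (μ : Measure α) [IsProbabilityMeasure μ]
  {G : α → ℝ}

/-- the joint law equals the product of marginals reweighted by the `X̄`-level density. -/
lemma joint_eq_withDensity (hv : v ≠ 0) (hG : Measurable G) (hmap : μ.map G = ν) :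
    (μ.prod (gaussianReal 0 v)).map (fun p : α × ℝ => (p.1, G p.1 + p.2))
      = (μ.prod (nuLY v ν)).withDensity (fun p => wFun v ν (G p.1, p.2)) := by
  have hD : Measurable fun p : α × ℝ => wFun v ν (G p.1, p.2) :=
    (measurable_wFun v ν).comp ((hG.comp measurable_fst).prodMk measurable_snd)
  have hae : ∀ᵐ x ∂μ, gaussianReal (G x) v
      = (nuLY v ν).withDensity (fun y => wFun v ν (G x, y)) := by
    refine ae_of_ae_map (p := fun t => gaussianReal t v
      = (nuLY v ν).withDensity (fun y => wFun v ν (t, y))) hG.aemeasurable ?_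
    rw [hmap]
    exact ae_gauss_eq hv
  have key : ∀ {S : Set α} {B : Set ℝ}, MeasurableSet S → MeasurableSet B →
      (μ.prod (gaussianReal 0 v)).map (fun p : α × ℝ => (p.1, G p.1 + p.2)) (S ×ˢ B)
        = (μ.prod (nuLY v ν)).withDensity (fun p => wFun v ν (G p.1, p.2)) (S ×ˢ B) := by
    intro S B hS hB
    rw [joint_rect μ hG hS hB, withDensity_apply _ (hS.prod hB), ← Measure.prod_restrict,
      lintegral_prod _ hD.aemeasurable]
    refine setLIntegral_congr_fun_ae hS ?_
    filter_upwards [hae] with x hx _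
    rw [hx, withDensity_apply _ hB]
  haveI : IsProbabilityMeasure ((μ.prod (gaussianReal 0 v)).map
      (fun p : α × ℝ => (p.1, G p.1 + p.2))) :=
    Measure.isProbabilityMeasure_map (measurable_T hG).aemeasurable
  refine ext_of_generate_finite _ generateFrom_prod.symm isPiSystem_prod ?_ ?_
  · rintro s ⟨S, hS, B, hB, rfl⟩
    exact key hS hB
  · rw [← Set.univ_prod_univ]
    exact key MeasurableSet.univ MeasurableSet.univ

/-- Main identity: the mutual information of the MISO joint law depends on the input
only through the law of `X̄ = G(X)`. -/
lemma mutualInfo_joint_eq (hv : v ≠ 0) (hG : Measurable G) (hmap : μ.map G = ν) :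
    mutualInfo ((μ.prod (gaussianReal 0 v)).map (fun p : α × ℝ => (p.1, G p.1 + p.2)))
      = if Integrable (ellFun v ν) (sisoJoint v ν)
        then ((∫ q, ellFun v ν q ∂(sisoJoint v ν) : ℝ) : EReal) else ⊤ := by
  set J := (μ.prod (gaussianReal 0 v)).map (fun p : α × ℝ => (p.1, G p.1 + p.2)) with hJ
  have hmfst : J.map Prod.fst = μ := joint_map_fst μ hG
  have hmsnd : J.map Prod.snd = nuLY v ν := joint_map_snd μ hG hmap
  have hrep : J = (μ.prod (nuLY v ν)).withDensity (fun p => wFun v ν (G p.1, p.2)) :=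
    joint_eq_withDensity μ hv hG hmap
  set R := μ.prod (nuLY v ν) with hR
  have hReq : (J.map Prod.fst).prod (J.map Prod.snd) = R := by rw [hmfst, hmsnd]
  have hD : Measurable fun p : α × ℝ => wFun v ν (G p.1, p.2) :=
    (measurable_wFun v ν).comp ((hG.comp measurable_fst).prodMk measurable_snd)
  have hac : J ≪ R := by rw [hrep]; exact withDensity_absolutelyContinuous _ _
  have hrn : J.rnDeriv R =ᵐ[R] fun p => wFun v ν (G p.1, p.2) := by
    nth_rewrite 1 [hrep]
    exact Measure.rnDeriv_withDensity R hD
  have hrn' : J.rnDeriv R =ᵐ[J] fun p => wFun v ν (G p.1, p.2) := hac.ae_le hrn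
  have hllr : llr J R =ᵐ[J] fun p => ellFun v ν (G p.1, p.2) := by
    filter_upwards [hrn'] with p hp
    rw [llr_def]
    simp only [hp, ellFun]
  have hm : Measurable fun p : α × ℝ => (G p.1, p.2) :=
    (hG.comp measurable_fst).prodMk measurable_snd
  have hmapτ : J.map (fun p : α × ℝ => (G p.1, p.2)) = sisoJoint v ν :=
    joint_map_pair μ hG hmap
  have hint : Integrable (llr J R) J ↔ Integrable (ellFun v ν) (sisoJoint v ν) := by
    rw [integrable_congr hllr, ← hmapτ,
      integrable_map_measure (measurable_ellFun v ν).aestronglyMeasurable hm.aemeasurable]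
    rfl
  have hval : ∫ p, llr J R p ∂J = ∫ q, ellFun v ν q ∂(sisoJoint v ν) := by
    rw [integral_congr_ae hllr, ← hmapτ,
      integral_map hm.aemeasurable (measurable_ellFun v ν).aestronglyMeasurable]
  rw [mutualInfo, hReq, klDiv]
  by_cases hI : Integrable (ellFun v ν) (sisoJoint v ν)
  · rw [if_pos ⟨hac, hint.mpr hI⟩, if_pos hI, hval]
  · rw [if_neg (fun hcon => hI (hint.mp hcon.2)), if_neg hI]

end Main

end MisoAux
end

theorem miso_capacity_energy_efficient_inputs (n : ℕ) (hn : 2 ≤ n) (h : Fin n → ℝ)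
    (hord : ∀ i j : Fin n, i ≤ j → h j ≤ h i) (hpos : ∀ k, 0 < h k)
    (v : ℝ≥0) (hv : 0 < v)
    (A E : ℝ) (hA : 0 < A) (hE : 0 < E) :
    misoCapacity h v A E
      = ⨆ μ ∈ {μ : Measure (Fin n → ℝ) | IsProbabilityMeasure μ ∧
          (∀ k, ∀ᵐ x ∂μ, x k ∈ Set.Icc 0 A) ∧ (∑ k, ∫ x, x k ∂μ) ≤ E ∧
          (∀ᵐ x ∂μ, ∀ k : Fin n, 0 < x k → ∀ j : Fin n, j < k → x j = A)},
        mutualInfo (misoJoint h v μ) := by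
  classical
  have hv' : v ≠ 0 := hv.ne'
  set G : (Fin n → ℝ) → ℝ := MisoAux.lin h with hGdef
  have hGmeas : Measurable G :=
    Finset.measurable_sum _ fun k _ => (measurable_pi_apply k).const_mul _
  have hFee : Measurable (MisoAux.ee h A) := measurable_pi_lambda _ fun k =>
    (((measurable_id.max measurable_const).min measurable_const).sub measurable_const).div_const _
  set F : (Fin n → ℝ) → (Fin n → ℝ) := fun x => MisoAux.ee h A (G x) with hFdef
  have hFmeas : Measurable F := hFee.comp hGmeas
  have hJ : ∀ m : Measure (Fin n → ℝ), misoJoint h v m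
      = (m.prod (gaussianReal 0 v)).map (fun p => (p.1, G p.1 + p.2)) := fun m => rfl
  refine le_antisymm ?_ ?_
  · rw [misoCapacity]
    refine iSup₂_le fun μ hμ => ?_
    obtain ⟨hprob, hpeak, havg⟩ := hμ
    haveI := hprob
    have hpeak' : ∀ᵐ x ∂μ, ∀ k, x k ∈ Set.Icc 0 A := (ae_all_iff).2 hpeak
    set ν : Measure ℝ := μ.map G with hν
    haveI : IsProbabilityMeasure ν := Measure.isProbabilityMeasure_map hGmeas.aemeasurable
    set μ' : Measure (Fin n → ℝ) := μ.map F with hμ'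
    haveI : IsProbabilityMeasure μ' := Measure.isProbabilityMeasure_map hFmeas.aemeasurable
    have hmap' : μ'.map G = ν := by
      rw [hμ', Measure.map_map hGmeas hFmeas, hν]
      refine Measure.map_congr ?_
      filter_upwards [hpeak'] with x hx
      have hmem := MisoAux.lin_mem hpos hA hx
      exact MisoAux.lin_ee hpos hA hmem.1 hmem.2
    have hkey : mutualInfo (misoJoint h v μ') = mutualInfo (misoJoint h v μ) := by
      rw [hJ μ, hJ μ', MisoAux.mutualInfo_joint_eq μ hv' hGmeas rfl,
        MisoAux.mutualInfo_joint_eq μ' hv' hGmeas hmap']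
    have hintF : ∀ k : Fin n, Integrable (fun x => F x k) μ := by
      intro k
      refine (integrable_const A).mono'
        ((measurable_pi_apply k).comp hFmeas).aestronglyMeasurable (ae_of_all _ fun x => ?_)
      have hmem := MisoAux.ee_mem hpos hA (G x) k
      rw [Real.norm_eq_abs, abs_of_nonneg hmem.1]
      exact hmem.2
    have hintX : ∀ k : Fin n, Integrable (fun x => x k) μ := by
      intro k
      refine (integrable_const A).mono'
        (measurable_pi_apply k).aestronglyMeasurable ?_
      filter_upwards [hpeak k] with x hx
      rw [Real.norm_eq_abs, abs_of_nonneg hx.1]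
      exact hx.2
    refine le_iSup₂_of_le μ' ⟨inferInstance, ?_, ?_, ?_⟩ (le_of_eq hkey.symm)
    · -- peak power
      intro k
      rw [hμ', MeasureTheory.ae_map_iff hFmeas.aemeasurable
        ((measurable_pi_apply k) measurableSet_Icc)]
      exact ae_of_all _ fun x => MisoAux.ee_mem hpos hA (G x) k
    · -- average power
      calc ∑ k, ∫ x, x k ∂μ' = ∑ k, ∫ x, F x k ∂μ := by
            refine Finset.sum_congr rfl fun k _ => ?_
            rw [hμ', integral_map hFmeas.aemeasurable (measurable_pi_apply k).aestronglyMeasurable]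
        _ = ∫ x, ∑ k, F x k ∂μ := (integral_finset_sum _ fun k _ => hintF k).symm
        _ ≤ ∫ x, ∑ k, x k ∂μ := by
            refine integral_mono_ae (integrable_finset_sum _ fun k _ => hintF k)
              (integrable_finset_sum _ fun k _ => hintX k) ?_
            filter_upwards [hpeak'] with x hx
            exact MisoAux.sum_ee_le (by omega) hord hpos hA hx
        _ = ∑ k, ∫ x, x k ∂μ := integral_finset_sum _ fun k _ => hintX k
        _ ≤ E := havg
    · -- structure
      have hSm : MeasurableSet {x : Fin n → ℝ |
          ∀ k : Fin n, 0 < x k → ∀ j : Fin n, j < k → x j = A} := by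
        have hset : {x : Fin n → ℝ | ∀ k : Fin n, 0 < x k → ∀ j : Fin n, j < k → x j = A}
            = ⋂ k : Fin n, ⋂ j : Fin n,
              ({x : Fin n → ℝ | ¬ 0 < x k} ∪ {x | ¬ j < k} ∪ {x | x j = A}) := by
          ext x
          simp only [Set.mem_setOf_eq, Set.mem_iInter, Set.mem_union]
          constructor
          · intro H k j
            by_cases h1 : 0 < x k
            · by_cases h2 : j < k
              · exact Or.inr (H k h1 j h2)
              · exact Or.inl (Or.inr h2)
            · exact Or.inl (Or.inl h1)
          · intro H k h1 j h2
            rcases H k j with (hh | hh) | hh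
            · exact absurd h1 hh
            · exact absurd h2 hh
            · exact hh
        rw [hset]
        refine MeasurableSet.iInter fun k => MeasurableSet.iInter fun j => ?_
        refine MeasurableSet.union (MeasurableSet.union ?_ ?_) ?_
        · exact ((measurable_pi_apply k) measurableSet_Ioi).compl
        · by_cases hjk : j < k
          · simp [hjk]
          · simp [hjk]
        · exact measurableSet_eq_fun (measurable_pi_apply j) measurable_const
      rw [hμ', MeasureTheory.ae_map_iff hFmeas.aemeasurable hSm]
      refine ae_of_all _ fun x => ?_
      intro k hk j hj
      exact MisoAux.ee_struct hpos hA (G x) k hk j hj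
  · rw [misoCapacity]
    exact iSup₂_le fun μ hμ => le_iSup₂_of_le μ ⟨hμ.1, hμ.2.1, hμ.2.2.1⟩ le_rfl
end

section
/- If α < n/2, then C_{h,σ²}(A, αA) equals the supremum of I(X̄; X̄ + Z) over all laws of a scalar random variable X̄ ≥ 0 satisfying both: (i) P(X̄ > s_n A) = 0; and (ii) ∑_{k=1}^n ( (E[X̄·1{U = k}] − A·s_{k−1}·P(U = k))/h_k + (k−1)·A·P(U = k) ) ≤ αA, where U is the index of the interval containing X̄. -/
open MeasureTheory ProbabilityTheory Real Filter
open scoped NNReal ENNReal Classical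

noncomputable section

namespace Aux

variable {n : ℕ} {h : Fin n → ℝ} {A : ℝ}

lemma sCum_zero (h : Fin n → ℝ) : sCum h 0 = 0 := by simp [sCum]

lemma sCum_succ {k : ℕ} (hk : k < n) :
    sCum h (k + 1) = sCum h k + h ⟨k, hk⟩ := by
  classical
  unfold sCum
  have : ∀ i : Fin n, (if i.val < k + 1 then h i else 0)
      = (if i.val < k then h i else 0) + (if i = ⟨k, hk⟩ then h i else 0) := by
    intro i
    rcases lt_trichotomy i.val k with hik | hik | hik
    · have h1 : i.val < k + 1 := by omega
      have h2 : i ≠ ⟨k, hk⟩ := by intro hc; subst hc; simp at hik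
      simp [h1, hik, h2]
    · have h1 : i.val < k + 1 := by omega
      have h2 : i = ⟨k, hk⟩ := Fin.ext hik
      simp [h1, hik, h2]
    · have h1 : ¬ i.val < k + 1 := by omega
      have h2 : i ≠ ⟨k, hk⟩ := by intro hc; subst hc; simp at hik
      have h3 : ¬ i.val < k := by omega
      simp [h1, h2, h3]
  rw [Finset.sum_congr rfl fun i _ => this i, Finset.sum_add_distrib]
  congr 1
  rw [Finset.sum_ite_eq' Finset.univ (⟨k, hk⟩ : Fin n)]
  simp

lemma sCum_mono (hpos : ∀ k, 0 < h k) : Monotone (sCum h) := by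
  intro a b hab
  unfold sCum
  refine Finset.sum_le_sum fun i _ => ?_
  by_cases h1 : i.val < a
  · have h2 : i.val < b := lt_of_lt_of_le h1 hab
    simp [h1, h2]
  · by_cases h2 : i.val < b <;> simp [h1, h2, (hpos i).le]

lemma sCum_nonneg (hpos : ∀ k, 0 < h k) (k : ℕ) : 0 ≤ sCum h k := by
  have := sCum_mono (hpos := hpos) (Nat.zero_le k)
  rwa [sCum_zero] at this

lemma sCum_top (h : Fin n → ℝ) : sCum h n = ∑ i, h i := by
  unfold sCum; exact Finset.sum_congr rfl fun i _ => by simp [i.isLt]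

lemma sum_if_lt (c : Fin n → ℝ) (k : Fin n) :
    (∑ j, if j < k then c j else 0) = ∑ j : Fin n, if j.val < k.val then c j else 0 :=
  Finset.sum_congr rfl fun j _ => if_congr Fin.lt_def rfl rfl

lemma sum_if_lt_const (k : Fin n) : (∑ j, if j < k then A else 0) = (k.val : ℝ) * A := by
  rw [sum_if_lt]
  have : ∀ m : ℕ, m ≤ n → (∑ j : Fin n, if j.val < m then A else 0) = (m : ℝ) * A := by
    intro m
    induction m with
    | zero => intro _; simp
    | succ m ih =>
      intro hm
      have h1 : (∑ j : Fin n, if j.val < m + 1 then A else 0)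
          = sCum (fun _ : Fin n => A) (m + 1) := rfl
      have h2 : (∑ j : Fin n, if j.val < m then A else 0)
          = sCum (fun _ : Fin n => A) m := rfl
      rw [h1, sCum_succ (by omega : m < n), ← h2, ih (by omega)]
      push_cast; ring
  exact this k.val k.isLt.le

/-- `g k t = (t - s_k A)/h_k + k A` : power used by the min-energy vector for `t ∈ I_k`. -/
def gFun (h : Fin n → ℝ) (A : ℝ) (k : Fin n) (t : ℝ) : ℝ :=
  (t - sCum h k.val * A) / h k + (k.val : ℝ) * A

/-- The min-energy vector for `t ∈ I_k`. -/
def pieceVec (h : Fin n → ℝ) (A : ℝ) (k : Fin n) (t : ℝ) : Fin n → ℝ :=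
  fun j => if j < k then A else if j = k then (t - sCum h k.val * A) / h k else 0

/-- The min-energy signaling map. -/
def Tmap (h : Fin n → ℝ) (A : ℝ) (t : ℝ) : Fin n → ℝ :=
  fun j => ∑ k, Set.indicator (uInterval h A k) (fun t => pieceVec h A k t j) t

lemma uInterval_disjoint (hpos : ∀ k, 0 < h k) (hA : 0 < A) {j k : Fin n} (hjk : j ≠ k) :
    Disjoint (uInterval h A j) (uInterval h A k) := by
  wlog hlt : j < k generalizing j k
  · exact (this hjk.symm ((Ne.lt_or_gt hjk).resolve_left hlt)).symm
  have hle : sCum h (j.val + 1) * A ≤ sCum h k.val * A :=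
    mul_le_mul_of_nonneg_right (sCum_mono hpos hlt) hA.le
  rw [Set.disjoint_left]
  intro t htj htk
  have h1 : t ≤ sCum h (j.val + 1) * A := by
    unfold uInterval at htj
    split_ifs at htj with hj
    · simpa [hj] using htj.2
    · exact htj.2
  have h2 : sCum h k.val * A < t := by
    unfold uInterval at htk
    split_ifs at htk with hk
    · have : (0 : ℕ) < k.val := by
        have := Fin.lt_def.mp hlt; omega
      omega
    · exact htk.1
  linarith

lemma mem_uInterval_cover (hpos : ∀ k, 0 < h k) (hA : 0 < A) (hn : 0 < n) {t : ℝ}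
    (ht : t ∈ Set.Icc 0 (sCum h n * A)) : ∃ k : Fin n, t ∈ uInterval h A k := by
  have main : ∀ m : ℕ, 0 < m → m ≤ n → t ∈ Set.Icc 0 (sCum h m * A) →
      ∃ k : Fin n, k.val < m ∧ t ∈ uInterval h A k := by
    intro m
    induction m with
    | zero => omega
    | succ m ih =>
      intro _ hmn htm
      by_cases hm : m = 0
      · subst hm
        refine ⟨⟨0, by omega⟩, by simp, ?_⟩
        simp only [uInterval, Fin.val_mk, if_pos rfl]
        exact htm
      · by_cases hle : t ≤ sCum h m * A
        · obtain ⟨k, hk, hk2⟩ := ih (by omega) (by omega) ⟨htm.1, hle⟩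
          exact ⟨k, by omega, hk2⟩
        · refine ⟨⟨m, by omega⟩, by simp, ?_⟩
          simp only [uInterval, Fin.val_mk, if_neg hm]
          exact ⟨lt_of_not_ge hle, htm.2⟩
  obtain ⟨k, _, hk⟩ := main n hn le_rfl ht
  exact ⟨k, hk⟩

lemma Tmap_eq_pieceVec (hpos : ∀ k, 0 < h k) (hA : 0 < A) {t : ℝ} {k : Fin n}
    (ht : t ∈ uInterval h A k) : Tmap h A t = pieceVec h A k t := by
  funext j
  unfold Tmap
  rw [Finset.sum_eq_single k]
  · simp [Set.indicator_of_mem ht]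
  · intro b _ hb
    refine Set.indicator_of_notMem (fun htb => ?_) _
    exact Set.disjoint_left.mp (uInterval_disjoint hpos hA hb) htb ht
  · simp

lemma Tmap_eq_zero {t : ℝ} (ht : ∀ k : Fin n, t ∉ uInterval h A k) : Tmap h A t = 0 := by
  funext j
  unfold Tmap
  simp only [Pi.zero_apply]
  exact Finset.sum_eq_zero fun k _ => Set.indicator_of_notMem (ht k) _

lemma mem_uInterval_bounds (hpos : ∀ k, 0 < h k) {t : ℝ} {k : Fin n}
    (ht : t ∈ uInterval h A k) :
    sCum h k.val * A ≤ t ∧ t ≤ (sCum h k.val + h k) * A := by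
  have hsucc : sCum h (k.val + 1) = sCum h k.val + h k := by
    have := sCum_succ (h := h) k.isLt; simpa using this
  unfold uInterval at ht
  split_ifs at ht with hk
  · rw [hk, sCum_zero]
    refine ⟨by simpa using ht.1, ?_⟩
    have h0n : 0 < n := by have := k.isLt; omega
    have := ht.2
    rw [show (1 : ℕ) = 0 + 1 from rfl, sCum_succ (h := h) h0n] at this
    have hk' : (⟨0, h0n⟩ : Fin n) = k := Fin.ext (by simp [hk])
    rw [sCum_zero, hk'] at this
    simpa using this
  · exact ⟨ht.1.le, by rw [← hsucc]; exact ht.2⟩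

lemma pieceVec_mem (hpos : ∀ k, 0 < h k) (hA : 0 < A) {t : ℝ} {k : Fin n}
    (ht : t ∈ uInterval h A k) (j : Fin n) : pieceVec h A k t j ∈ Set.Icc 0 A := by
  obtain ⟨hb1, hb2⟩ := mem_uInterval_bounds hpos ht
  unfold pieceVec
  split_ifs with h1 h2
  · exact ⟨hA.le, le_rfl⟩
  · constructor
    · exact div_nonneg (by linarith) (hpos k).le
    · rw [div_le_iff₀ (hpos k)]
      nlinarith
  · exact ⟨le_rfl, hA.le⟩

lemma Tmap_mem (hpos : ∀ k, 0 < h k) (hA : 0 < A) (t : ℝ) (j : Fin n) :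
    Tmap h A t j ∈ Set.Icc 0 A := by
  by_cases ht : ∃ k : Fin n, t ∈ uInterval h A k
  · obtain ⟨k, hk⟩ := ht
    rw [Tmap_eq_pieceVec hpos hA hk]
    exact pieceVec_mem hpos hA hk j
  · push_neg at ht
    rw [Tmap_eq_zero ht]
    exact ⟨le_rfl, hA.le⟩

lemma dot_pieceVec (hpos : ∀ k, 0 < h k) (k : Fin n) (t : ℝ) :
    ∑ j, h j * pieceVec h A k t j = sCum h k.val * A + (t - sCum h k.val * A) := by
  unfold pieceVec
  have : ∀ j : Fin n, h j * (if j < k then A else if j = k then (t - sCum h k.val * A) / h k else 0)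
      = (if j < k then h j * A else 0)
        + (if j = k then h k * ((t - sCum h k.val * A) / h k) else 0) := by
    intro j
    rcases lt_trichotomy j k with hj | hj | hj
    · simp [hj, hj.ne]
    · simp [hj, lt_irrefl]
    · simp [hj.ne', not_lt_of_gt hj]
  rw [Finset.sum_congr rfl fun j _ => this j, Finset.sum_add_distrib]
  congr 1
  · rw [sum_if_lt, sCum, Finset.sum_mul]
    exact Finset.sum_congr rfl fun j _ => by split_ifs <;> simp
  · rw [Finset.sum_ite_eq' Finset.univ k]
    simp [mul_div_cancel₀ _ (hpos k).ne']

lemma dot_Tmap (hpos : ∀ k, 0 < h k) (hA : 0 < A) {t : ℝ} {k : Fin n}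
    (ht : t ∈ uInterval h A k) : ∑ j, h j * Tmap h A t j = t := by
  rw [Tmap_eq_pieceVec hpos hA ht, dot_pieceVec hpos]
  ring

lemma sum_pieceVec (hpos : ∀ k, 0 < h k) (k : Fin n) (t : ℝ) :
    ∑ j, pieceVec h A k t j = gFun h A k t := by
  unfold pieceVec gFun
  have : ∀ j : Fin n, (if j < k then A else if j = k then (t - sCum h k.val * A) / h k else 0)
      = (if j < k then A else 0) + (if j = k then (t - sCum h k.val * A) / h k else 0) := by
    intro j
    rcases lt_trichotomy j k with hj | hj | hj
    · simp [hj, hj.ne]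
    · simp [hj, lt_irrefl]
    · simp [hj.ne', not_lt_of_gt hj]
  rw [Finset.sum_congr rfl fun j _ => this j, Finset.sum_add_distrib, sum_if_lt_const,
    Finset.sum_ite_eq' Finset.univ k]
  simp [add_comm]

lemma sum_Tmap (hpos : ∀ k, 0 < h k) (hA : 0 < A) (t : ℝ) :
    ∑ j, Tmap h A t j = ∑ k, Set.indicator (uInterval h A k) (gFun h A k) t := by
  by_cases ht : ∃ k : Fin n, t ∈ uInterval h A k
  · obtain ⟨k, hk⟩ := ht
    rw [Tmap_eq_pieceVec hpos hA hk, sum_pieceVec hpos,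
      Finset.sum_eq_single k (fun b _ hb => Set.indicator_of_notMem
        (fun htb => Set.disjoint_left.mp (uInterval_disjoint hpos hA hb) htb hk) _) (by simp),
      Set.indicator_of_mem hk]
  · push_neg at ht
    rw [Tmap_eq_zero ht]
    simp only [Pi.zero_apply, Finset.sum_const_zero]
    exact (Finset.sum_eq_zero fun k _ => Set.indicator_of_notMem (ht k) _).symm

/-- The minimum-energy inequality: for any `x ∈ [0,A]^n` and any `k`,
`g_k(h·x) ≤ ∑ x_j`, provided `h` is nonincreasing and positive. -/
lemma gFun_le (hord : ∀ i j : Fin n, i ≤ j → h j ≤ h i) (hpos : ∀ k, 0 < h k) (hA : 0 < A)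
    {x : Fin n → ℝ} (hx : ∀ j, x j ∈ Set.Icc 0 A) (k : Fin n) :
    gFun h A k (∑ j, h j * x j) ≤ ∑ j, x j := by
  unfold gFun
  rw [div_add' _ _ _ (hpos k).ne', div_le_iff₀ (hpos k)]
  -- suffices: ∑ h_j x_j - s_k A + k A h_k ≤ h_k ∑ x_j
  have key : ∑ j, h j * x j ≤ (∑ j, if j < k then (h j - h k) * A else 0) + h k * ∑ j, x j := by
    rw [Finset.mul_sum, ← Finset.sum_add_distrib]
    refine Finset.sum_le_sum fun j _ => ?_
    by_cases hj : j < k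
    · simp only [hj, if_pos]
      have h1 : h k ≤ h j := hord j k hj.le
      have h2 : x j ≤ A := (hx j).2
      have h3 : 0 ≤ x j := (hx j).1
      nlinarith
    · simp only [hj, if_neg, not_false_iff, zero_add]
      have h1 : h j ≤ h k := hord k j (le_of_not_gt hj)
      have h3 : 0 ≤ x j := (hx j).1
      nlinarith
  have hsum : (∑ j, if j < k then (h j - h k) * A else 0)
      = sCum h k.val * A - (k.val : ℝ) * A * h k := by
    have : ∀ j : Fin n, (if j < k then (h j - h k) * A else 0)
        = (if j < k then h j * A else 0) - (if j < k then h k * A else 0) := by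
      intro j; split_ifs <;> ring
    rw [Finset.sum_congr rfl fun j _ => this j, Finset.sum_sub_distrib]
    have e1 : (∑ j, if j < k then h j * A else 0) = sCum h k.val * A := by
      rw [sum_if_lt, sCum, Finset.sum_mul]
      exact Finset.sum_congr rfl fun j _ => by split_ifs <;> simp
    have e2 : (∑ j, if j < k then h k * A else 0) = (k.val : ℝ) * (h k * A) :=
      sum_if_lt_const k
    rw [e1, e2]; ring
  nlinarith [key, hsum]

end Aux

namespace Aux2

variable {X : Type*} [MeasurableSpace X] {v : ℝ≥0} {f : X → ℝ}

/-- The joint law of `(X, f(X) + Z)`. -/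
def jointM (v : ℝ≥0) (μ : Measure X) (f : X → ℝ) : Measure (X × ℝ) :=
  (μ.prod (gaussianReal 0 v)).map (fun p => (p.1, f p.1 + p.2))

/-- The output density. -/
def rFun (v : ℝ≥0) (μ : Measure X) (f : X → ℝ) (y : ℝ) : ℝ≥0∞ :=
  ∫⁻ x, gaussianPDF (f x) v y ∂μ

lemma measurable_gpdf2 (v : ℝ≥0) : Measurable (fun p : ℝ × ℝ => gaussianPDF p.1 v p.2) := by
  refine Measurable.ennreal_ofReal ?_
  have : Continuous (fun p : ℝ × ℝ => gaussianPDFReal p.1 v p.2) := by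
    unfold gaussianPDFReal
    fun_prop
  exact this.measurable

lemma measurable_dens (hf : Measurable f) :
    Measurable (fun p : X × ℝ => gaussianPDF (f p.1) v p.2) := by
  have h1 : (fun p : X × ℝ => gaussianPDF (f p.1) v p.2)
      = (fun q : ℝ × ℝ => gaussianPDF q.1 v q.2) ∘ (fun p : X × ℝ => (f p.1, p.2)) := rfl
  rw [h1]
  exact (measurable_gpdf2 v).comp ((hf.comp measurable_fst).prodMk measurable_snd)

lemma measurable_psi (hf : Measurable f) :
    Measurable (fun p : X × ℝ => (p.1, f p.1 + p.2)) :=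
  measurable_fst.prodMk ((hf.comp measurable_fst).add measurable_snd)

lemma measurable_rFun (hf : Measurable f) (μ : Measure X) [SFinite μ] :
    Measurable (rFun v μ f) := by
  have h1 : Measurable (fun p : ℝ × X => gaussianPDF (f p.2) v p.1) := by
    have : (fun p : ℝ × X => gaussianPDF (f p.2) v p.1)
        = (fun q : ℝ × ℝ => gaussianPDF q.1 v q.2) ∘ (fun p : ℝ × X => (f p.2, p.1)) := rfl
    rw [this]
    exact (measurable_gpdf2 v).comp ((hf.comp measurable_snd).prodMk measurable_fst)
  exact h1.lintegral_prod_right'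

lemma jointM_eq_withDensity (hv : v ≠ 0) (hf : Measurable f) (μ : Measure X) [SFinite μ] :
    jointM v μ f = (μ.prod volume).withDensity (fun p => gaussianPDF (f p.1) v p.2) := by
  ext s hs
  rw [jointM, Measure.map_apply (measurable_psi hf) hs,
    Measure.prod_apply ((measurable_psi hf) hs), withDensity_apply _ hs,
    ← lintegral_indicator hs,
    MeasureTheory.lintegral_prod _ ((measurable_dens hf).indicator hs).aemeasurable]
  refine lintegral_congr fun x => ?_
  have hBx : MeasurableSet (Prod.mk x ⁻¹' s) := measurable_prodMk_left hs
  have hpre : (Prod.mk x ⁻¹' ((fun p : X × ℝ => (p.1, f p.1 + p.2)) ⁻¹' s))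
      = (fun z => f x + z) ⁻¹' (Prod.mk x ⁻¹' s) := rfl
  rw [hpre, ← Measure.map_apply (measurable_const_add (f x)) hBx]
  have hmap : (gaussianReal 0 v).map (fun z => f x + z) = gaussianReal (f x) v := by
    have := gaussianReal_map_const_add (μ := 0) (v := v) (f x)
    rwa [zero_add] at this
  rw [hmap, gaussianReal_apply _ hv, ← lintegral_indicator hBx]
  refine lintegral_congr fun y => ?_
  by_cases hy : (x, y) ∈ s
  · rw [Set.indicator_of_mem hy, Set.indicator_of_mem (by exact hy)]
  · rw [Set.indicator_of_notMem hy, Set.indicator_of_notMem (by exact hy)]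


lemma jointM_fst (hf : Measurable f) (μ : Measure X) [IsProbabilityMeasure μ] :
    (jointM v μ f).map Prod.fst = μ := by
  rw [jointM, Measure.map_map measurable_fst (measurable_psi hf)]
  have : (Prod.fst ∘ fun p : X × ℝ => (p.1, f p.1 + p.2)) = Prod.fst := rfl
  rw [this, Measure.map_fst_prod]
  simp

lemma jointM_snd (hv : v ≠ 0) (hf : Measurable f) (μ : Measure X) [SFinite μ] :
    (jointM v μ f).map Prod.snd = volume.withDensity (rFun v μ f) := by
  ext s hs
  rw [Measure.map_apply measurable_snd hs,
    jointM_eq_withDensity hv hf μ, withDensity_apply _ (measurable_snd hs),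
    withDensity_apply _ hs, ← lintegral_indicator (measurable_snd hs),
    MeasureTheory.lintegral_prod_symm _
      (((measurable_dens hf).indicator (measurable_snd hs)).aemeasurable)]
  rw [← lintegral_indicator hs]
  refine lintegral_congr fun y => ?_
  by_cases hy : y ∈ s
  · rw [Set.indicator_of_mem hy]
    have heq : (∫⁻ x, (Prod.snd ⁻¹' s).indicator
        (fun p : X × ℝ => gaussianPDF (f p.1) v p.2) (x, y) ∂μ)
        = ∫⁻ x, gaussianPDF (f x) v y ∂μ :=
      lintegral_congr fun x => Set.indicator_of_mem hy _
    rw [heq]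
    rfl
  · rw [Set.indicator_of_notMem hy]
    have : ∀ x : X, (Prod.snd ⁻¹' s).indicator
        (fun p : X × ℝ => gaussianPDF (f p.1) v p.2) (x, y) = 0 :=
      fun x => Set.indicator_of_notMem hy _
    simp [this]

lemma rFun_ne_zero (hv : v ≠ 0) (hf : Measurable f) (μ : Measure X) [IsProbabilityMeasure μ]
    (y : ℝ) : rFun v μ f y ≠ 0 := by
  rw [rFun, ← pos_iff_ne_zero]
  have hmeas : Measurable fun x => gaussianPDF (f x) v y := by
    have : (fun x => gaussianPDF (f x) v y)
        = (fun q : ℝ × ℝ => gaussianPDF q.1 v q.2) ∘ (fun x => (f x, y)) := rfl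
    rw [this]
    exact (measurable_gpdf2 v).comp (hf.prodMk measurable_const)
  by_contra hzero
  push_neg at hzero
  rw [le_zero_iff, lintegral_eq_zero_iff hmeas] at hzero
  have h1 : ∀ᵐ x ∂μ, False := by
    filter_upwards [hzero] with x hx
    exact absurd hx (gaussianPDF_pos _ hv _).ne'
  rw [ae_iff] at h1
  simp only [not_false_iff, Set.setOf_true] at h1
  have h2 : μ Set.univ = 0 := h1
  rw [measure_univ] at h2
  exact one_ne_zero h2

lemma gaussianPDF_le_bound (m y : ℝ) :
    gaussianPDF m v y ≤ ENNReal.ofReal ((Real.sqrt (2 * π * v))⁻¹) := by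
  rw [gaussianPDF]
  refine ENNReal.ofReal_le_ofReal ?_
  rw [gaussianPDFReal]
  have h1 : rexp (-(y - m) ^ 2 / (2 * v)) ≤ 1 := by
    rw [Real.exp_le_one_iff]
    apply div_nonpos_of_nonpos_of_nonneg
    · simp [sq_nonneg]
    · positivity
  have h2 : (0:ℝ) ≤ (Real.sqrt (2 * π * v))⁻¹ := by positivity
  nlinarith

lemma rFun_ne_top (μ : Measure X) [IsProbabilityMeasure μ] (y : ℝ) :
    rFun v μ f y ≠ ⊤ := by
  have hle : rFun v μ f y ≤ ENNReal.ofReal ((Real.sqrt (2 * π * v))⁻¹) := by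
    refine le_trans (lintegral_mono fun x => gaussianPDF_le_bound _ _) ?_
    rw [lintegral_const, measure_univ, mul_one]
  exact ne_top_of_le_ne_top ENNReal.ofReal_ne_top hle

lemma prod_withDensity_snd (μ : Measure X) [SFinite μ] {r : ℝ → ℝ≥0∞} (hr : Measurable r) :
    μ.prod (volume.withDensity r) = (μ.prod volume).withDensity (fun p => r p.2) := by
  ext s hs
  have hm : Measurable fun p : X × ℝ => r p.2 := hr.comp measurable_snd
  rw [Measure.prod_apply hs, withDensity_apply _ hs, ← lintegral_indicator hs,
    MeasureTheory.lintegral_prod _ (hm.indicator hs).aemeasurable]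
  refine lintegral_congr fun x => ?_
  have hBx : MeasurableSet (Prod.mk x ⁻¹' s) := measurable_prodMk_left hs
  rw [withDensity_apply _ hBx, ← lintegral_indicator hBx]
  refine lintegral_congr fun y => ?_
  by_cases hy : (x, y) ∈ s
  · rw [Set.indicator_of_mem hy, Set.indicator_of_mem (by exact hy)]
  · rw [Set.indicator_of_notMem hy, Set.indicator_of_notMem (by exact hy)]

lemma jointM_isProb (v : ℝ≥0) (μ : Measure X) [IsProbabilityMeasure μ] (hf : Measurable f) :
    IsProbabilityMeasure (jointM v μ f) :=
  Measure.isProbabilityMeasure_map (measurable_psi hf).aemeasurable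

/-- The product of the two marginals. -/
def prodOut (v : ℝ≥0) (μ : Measure X) (f : X → ℝ) : Measure (X × ℝ) :=
  μ.prod (volume.withDensity (rFun v μ f))

lemma jointM_ac (hv : v ≠ 0) (hf : Measurable f) (μ : Measure X) [IsProbabilityMeasure μ] :
    jointM v μ f ≪ prodOut v μ f := by
  rw [prodOut, prod_withDensity_snd μ (measurable_rFun hf μ), jointM_eq_withDensity hv hf μ]
  refine (withDensity_absolutelyContinuous _ _).trans ?_
  exact withDensity_absolutelyContinuous'
    ((measurable_rFun hf μ).comp measurable_snd).aemeasurable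
    (Eventually.of_forall fun p => rFun_ne_zero hv hf μ p.2)

lemma jointM_rnDeriv (hv : v ≠ 0) (hf : Measurable f) (μ : Measure X) [IsProbabilityMeasure μ] :
    (jointM v μ f).rnDeriv (prodOut v μ f)
      =ᵐ[jointM v μ f] fun p => (rFun v μ f p.2)⁻¹ * gaussianPDF (f p.1) v p.2 := by
  have hACbase : jointM v μ f ≪ μ.prod volume := by
    rw [jointM_eq_withDensity hv hf μ]
    exact withDensity_absolutelyContinuous _ _
  have h1 : (jointM v μ f).rnDeriv (μ.prod volume)
      =ᵐ[μ.prod volume] fun p => gaussianPDF (f p.1) v p.2 := by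
    rw [jointM_eq_withDensity hv hf μ]
    exact Measure.rnDeriv_withDensity (μ.prod volume) (measurable_dens hf)
  haveI : IsProbabilityMeasure (jointM v μ f) := jointM_isProb v μ hf
  have h2 := Measure.rnDeriv_withDensity_right_of_absolutelyContinuous
    (μ := jointM v μ f) (ν := μ.prod volume)
    (f := fun p : X × ℝ => rFun v μ f p.2) hACbase
    ((measurable_rFun hf μ).comp measurable_snd).aemeasurable
    (Eventually.of_forall fun p => rFun_ne_zero hv hf μ p.2)
    (Eventually.of_forall fun p => rFun_ne_top μ p.2)
  rw [prodOut, prod_withDensity_snd μ (measurable_rFun hf μ)]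
  have hbase : (jointM v μ f).rnDeriv ((μ.prod volume).withDensity fun p => rFun v μ f p.2)
      =ᵐ[μ.prod volume] fun p => (rFun v μ f p.2)⁻¹ * gaussianPDF (f p.1) v p.2 := by
    filter_upwards [h1, h2] with p hp1 hp2
    rw [hp2, hp1]
  exact hbase.filter_mono hACbase.ae_le

lemma llr_jointM (hv : v ≠ 0) (hf : Measurable f) (μ : Measure X) [IsProbabilityMeasure μ] :
    llr (jointM v μ f) (prodOut v μ f)
      =ᵐ[jointM v μ f]
        fun p => log ((rFun v μ f p.2)⁻¹ * gaussianPDF (f p.1) v p.2).toReal := by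
  filter_upwards [jointM_rnDeriv hv hf μ] with p hp
  rw [llr_def]
  simp only
  rw [hp]

lemma measurable_Lfun (hv : v ≠ 0) (hf : Measurable f) (μ : Measure X) [SFinite μ] :
    Measurable (fun q : ℝ × ℝ => log ((rFun v μ f q.2)⁻¹ * gaussianPDF q.1 v q.2).toReal) := by
  refine Real.measurable_log.comp (ENNReal.measurable_toReal.comp ?_)
  exact (((measurable_rFun hf μ).comp measurable_snd).inv).mul (measurable_gpdf2 v)

lemma jointM_map_T (hf : Measurable f) (μ : Measure X) [IsProbabilityMeasure μ] :
    jointM v (μ.map f) (id : ℝ → ℝ) = (jointM v μ f).map (fun p : X × ℝ => (f p.1, p.2)) := by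
  have hT : Measurable (fun p : X × ℝ => (f p.1, p.2)) :=
    (hf.comp measurable_fst).prodMk measurable_snd
  rw [jointM, jointM, Measure.map_map hT (measurable_psi hf)]
  have h1 : (μ.map f).prod (gaussianReal 0 v)
      = (μ.prod (gaussianReal 0 v)).map (Prod.map f (id : ℝ → ℝ)) := by
    have := Measure.map_prod_map (f := f) (g := (id : ℝ → ℝ)) μ (gaussianReal 0 v)
      hf measurable_id
    rwa [Measure.map_id] at this
  rw [h1, Measure.map_map (measurable_psi measurable_id) (hf.prodMap measurable_id)]
  rfl

/-- Mutual information is invariant under replacing `X` by `f(X)`. -/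
theorem mutualInfo_jointM (hv : v ≠ 0) (hf : Measurable f) (μ : Measure X)
    [IsProbabilityMeasure μ] :
    mutualInfo (jointM v μ f) = mutualInfo (jointM v (μ.map f) (id : ℝ → ℝ)) := by
  haveI : IsProbabilityMeasure (μ.map f) := Measure.isProbabilityMeasure_map hf.aemeasurable
  haveI : IsProbabilityMeasure (jointM v μ f) := jointM_isProb v μ hf
  haveI : IsProbabilityMeasure (jointM v (μ.map f) (id : ℝ → ℝ)) :=
    jointM_isProb v (μ.map f) measurable_id
  have hr : rFun v (μ.map f) (id : ℝ → ℝ) = rFun v μ f := by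
    funext y
    rw [rFun, rFun, lintegral_map _ hf]
    · rfl
    · have h1 : (fun t : ℝ => gaussianPDF (id t) v y)
          = (fun q : ℝ × ℝ => gaussianPDF q.1 v q.2) ∘ (fun t => (t, y)) := rfl
      rw [h1]
      exact (measurable_gpdf2 v).comp (measurable_id.prodMk measurable_const)
  have hprodOut : prodOut v (μ.map f) (id : ℝ → ℝ) = (μ.map f).prod
      (volume.withDensity (rFun v μ f)) := by rw [prodOut, hr]
  have hT : Measurable (fun p : X × ℝ => (f p.1, p.2)) :=
    (hf.comp measurable_fst).prodMk measurable_snd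
  set P := jointM v μ f with hP
  set Q := jointM v (μ.map f) (id : ℝ → ℝ) with hQdef
  set L : ℝ × ℝ → ℝ :=
    fun q => log ((rFun v μ f q.2)⁻¹ * gaussianPDF q.1 v q.2).toReal with hL
  have hLmeas : Measurable L := measurable_Lfun hv hf μ
  have hQP : Q = P.map (fun p : X × ℝ => (f p.1, p.2)) := jointM_map_T hf μ
  have hllrP : llr P (prodOut v μ f)
      =ᵐ[P] fun p : X × ℝ => L (f p.1, p.2) := llr_jointM hv hf μ
  have hllrQ : llr Q (prodOut v (μ.map f) (id : ℝ → ℝ)) =ᵐ[Q] L := by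
    have := llr_jointM hv measurable_id (μ.map f)
    rw [hr] at this
    exact this
  -- marginals
  have hmfstP : P.map Prod.fst = μ := jointM_fst hf μ
  have hmsndP : P.map Prod.snd = volume.withDensity (rFun v μ f) := jointM_snd hv hf μ
  have hmfstQ : Q.map Prod.fst = μ.map f := jointM_fst measurable_id (μ.map f)
  have hmsndQ : Q.map Prod.snd = volume.withDensity (rFun v μ f) := by
    rw [hQdef, jointM_snd hv measurable_id (μ.map f), hr]
  -- AC
  have hACP : P ≪ prodOut v μ f := jointM_ac hv hf μ
  have hACQ : Q ≪ prodOut v (μ.map f) (id : ℝ → ℝ) := jointM_ac hv measurable_id (μ.map f)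
  -- integrability transfer
  have hintiff : Integrable (llr P (prodOut v μ f)) P
      ↔ Integrable (llr Q (prodOut v (μ.map f) (id : ℝ → ℝ))) Q := by
    rw [integrable_congr hllrP, integrable_congr hllrQ, hQP,
      integrable_map_measure hLmeas.aestronglyMeasurable hT.aemeasurable]
    rfl
  -- integral transfer
  have hinteq : ∫ p, llr P (prodOut v μ f) p ∂P
      = ∫ q, llr Q (prodOut v (μ.map f) (id : ℝ → ℝ)) q ∂Q := by
    rw [integral_congr_ae hllrP, integral_congr_ae hllrQ, hQP,
      integral_map hT.aemeasurable hLmeas.aestronglyMeasurable]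
  rw [mutualInfo, mutualInfo, hmfstP, hmsndP, hmfstQ, hmsndQ]
  have hPout : μ.prod (volume.withDensity (rFun v μ f)) = prodOut v μ f := rfl
  have hQout : (μ.map f).prod (volume.withDensity (rFun v μ f))
      = prodOut v (μ.map f) (id : ℝ → ℝ) := hprodOut.symm
  rw [hPout, hQout, klDiv, klDiv]
  by_cases hint : Integrable (llr P (prodOut v μ f)) P
  · rw [if_pos ⟨hACP, hint⟩, if_pos ⟨hACQ, hintiff.mp hint⟩, hinteq]
  · rw [if_neg (fun hc => hint hc.2), if_neg (fun hc => hint (hintiff.mpr hc.2))]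

end Aux2


namespace Aux3

open Aux Aux2

variable {n : ℕ} {h : Fin n → ℝ} {A : ℝ}


lemma measurableSet_uInterval (k : Fin n) : MeasurableSet (uInterval h A k) := by
  unfold uInterval
  split_ifs
  · exact measurableSet_Icc
  · exact measurableSet_Ioc

lemma measurable_Tmap_apply (j : Fin n) : Measurable (fun t => Tmap h A t j) := by
  unfold Tmap
  refine Finset.measurable_sum _ fun k _ => ?_
  refine Measurable.indicator ?_ (measurableSet_uInterval k)
  unfold pieceVec
  split_ifs
  · exact measurable_const
  · exact (measurable_id.sub measurable_const).div measurable_const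
  · exact measurable_const

lemma measurable_Tmap : Measurable (Tmap h A) :=
  measurable_pi_lambda _ fun j => measurable_Tmap_apply j

lemma measurable_sumTmap : Measurable (fun t => ∑ j, Tmap h A t j) :=
  Finset.measurable_sum _ fun j _ => measurable_Tmap_apply j

lemma sumTmap_nonneg (hpos : ∀ k, 0 < h k) (hA : 0 < A) (t : ℝ) :
    0 ≤ ∑ j, Tmap h A t j :=
  Finset.sum_nonneg fun j _ => (Tmap_mem hpos hA t j).1

lemma sumTmap_le (hpos : ∀ k, 0 < h k) (hA : 0 < A) (t : ℝ) :
    ∑ j, Tmap h A t j ≤ n * A := by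
  calc ∑ j, Tmap h A t j ≤ ∑ _j : Fin n, A :=
        Finset.sum_le_sum fun j _ => (Tmap_mem hpos hA t j).2
    _ = n * A := by simp [mul_comm]

lemma integrable_sumTmap (hpos : ∀ k, 0 < h k) (hA : 0 < A) (ν : Measure ℝ)
    [IsProbabilityMeasure ν] : Integrable (fun t => ∑ j, Tmap h A t j) ν := by
  refine (integrable_const ((n : ℝ) * A)).mono' measurable_sumTmap.aestronglyMeasurable ?_
  refine Eventually.of_forall fun t => ?_
  rw [Real.norm_eq_abs, abs_of_nonneg (sumTmap_nonneg hpos hA t)]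
  exact sumTmap_le hpos hA t

lemma integrableOn_id_uInterval (ν : Measure ℝ) [IsFiniteMeasure ν] (k : Fin n) :
    IntegrableOn (fun t : ℝ => t) (uInterval h A k) ν := by
  have hbd : ∃ C : ℝ, ∀ t ∈ uInterval h A k, |t| ≤ C := by
    refine ⟨max |sCum h k.val * A| (max |sCum h 1 * A| |sCum h (k.val + 1) * A|), fun t ht => ?_⟩
    unfold uInterval at ht
    split_ifs at ht with hk
    · rw [abs_le]
      constructor
      · have h0 : (0:ℝ) ≤ max |sCum h ↑k * A| (max |sCum h 1 * A| |sCum h (↑k + 1) * A|) :=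
          le_max_of_le_left (abs_nonneg _)
        linarith [ht.1]
      · exact le_trans ht.2 (le_trans (le_abs_self _) (le_max_of_le_right (le_max_left _ _)))
    · rw [abs_le]
      constructor
      · have := ht.1
        have h2 : -(|sCum h ↑k * A|) ≤ sCum h ↑k * A := neg_abs_le _
        have : -(max |sCum h ↑k * A| (max |sCum h 1 * A| |sCum h (↑k + 1) * A|))
            ≤ -(|sCum h ↑k * A|) := by
          simp only [neg_le_neg_iff]
          exact le_max_left _ _
        linarith [ht.1]
      · exact le_trans ht.2 (le_trans (le_abs_self _)
          (le_max_of_le_right (le_max_right _ _)))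
  obtain ⟨C, hC⟩ := hbd
  refine (integrable_const C).mono' measurable_id.aestronglyMeasurable ?_
  refine (ae_restrict_iff' (measurableSet_uInterval k)).mpr ?_
  exact Eventually.of_forall fun t ht => by simpa using hC t ht

lemma integral_gFun_uInterval (hpos : ∀ k, 0 < h k) (ν : Measure ℝ) [IsFiniteMeasure ν]
    (k : Fin n) :
    ∫ t in uInterval h A k, gFun h A k t ∂ν
      = ((∫ x in uInterval h A k, x ∂ν) - A * sCum h k.val * (ν (uInterval h A k)).toReal) / h k
        + (k.val : ℝ) * A * (ν (uInterval h A k)).toReal := by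
  have hid := integrableOn_id_uInterval (h := h) (A := A) ν k
  have hconst : ∀ c : ℝ, ∫ _t in uInterval h A k, c ∂ν = (ν (uInterval h A k)).toReal * c := by
    intro c
    rw [setIntegral_const, smul_eq_mul]
    rfl
  unfold gFun
  rw [integral_add, integral_div]
  · rw [integral_sub hid (integrable_const _), hconst, hconst]
    ring
  · exact ((hid.sub (integrable_const _)).div_const _)
  · exact integrable_const _

lemma integrable_indicator_gFun (hpos : ∀ k, 0 < h k) (hA : 0 < A) (ν : Measure ℝ)
    [IsProbabilityMeasure ν] (k : Fin n) :
    Integrable (Set.indicator (uInterval h A k) (gFun h A k)) ν := by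
  have hmeas : Measurable (gFun h A k) := by
    unfold gFun
    exact ((measurable_id.sub measurable_const).div measurable_const).add measurable_const
  refine (integrable_const ((k.val : ℝ) * A + A)).mono'
    (hmeas.indicator (measurableSet_uInterval k)).aestronglyMeasurable ?_
  refine Eventually.of_forall fun t => ?_
  rw [Real.norm_eq_abs]
  by_cases ht : t ∈ uInterval h A k
  · rw [Set.indicator_of_mem ht]
    obtain ⟨hb1, hb2⟩ := mem_uInterval_bounds hpos ht
    have h1 : 0 ≤ (t - sCum h k.val * A) / h k := div_nonneg (by linarith) (hpos k).le
    have h2 : (t - sCum h k.val * A) / h k ≤ A := by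
      rw [div_le_iff₀ (hpos k)]; nlinarith [hpos k, hA]
    unfold gFun
    rw [abs_of_nonneg (by positivity)]
    have : 0 ≤ (k.val : ℝ) * A := by positivity
    linarith
  · rw [Set.indicator_of_notMem ht]
    simp
    positivity

/-- `avgPowerUse` equals the expected total power of the min-energy vector. -/
lemma avgPowerUse_eq_integral (hpos : ∀ k, 0 < h k) (hA : 0 < A) (ν : Measure ℝ)
    [IsProbabilityMeasure ν] :
    avgPowerUse h A ν = ∫ t, (∑ j, Tmap h A t j) ∂ν := by
  have h1 : ∀ t, (∑ j, Tmap h A t j)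
      = ∑ k, Set.indicator (uInterval h A k) (gFun h A k) t := fun t => sum_Tmap hpos hA t
  rw [integral_congr_ae (Eventually.of_forall h1),
    integral_finset_sum _ (fun k _ => integrable_indicator_gFun hpos hA ν k)]
  unfold avgPowerUse
  refine Finset.sum_congr rfl fun k _ => ?_
  rw [integral_indicator (measurableSet_uInterval k), integral_gFun_uInterval hpos ν k]

end Aux3


namespace Main

open Aux Aux2 Aux3

variable {n : ℕ} {h : Fin n → ℝ} {v : ℝ≥0} {A α : ℝ}

def fX (h : Fin n → ℝ) : (Fin n → ℝ) → ℝ := fun x => ∑ k, h k * x k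

lemma measurable_fX : Measurable (fX h) :=
  Finset.measurable_sum _ fun k _ => by fun_prop

lemma integrable_Tmap_apply (hpos : ∀ k, 0 < h k) (hA : 0 < A) (ν : Measure ℝ)
    [IsProbabilityMeasure ν] (k : Fin n) : Integrable (fun t => Tmap h A t k) ν := by
  refine (integrable_const A).mono' (measurable_Tmap_apply k).aestronglyMeasurable ?_
  refine Eventually.of_forall fun t => ?_
  have := Tmap_mem hpos hA t k
  rw [Real.norm_eq_abs, abs_of_nonneg this.1]
  exact this.2

lemma siso_feasible (hord : ∀ i j : Fin n, i ≤ j → h j ≤ h i) (hpos : ∀ k, 0 < h k)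
    (hA : 0 < A) (μ : Measure (Fin n → ℝ)) (hprob : IsProbabilityMeasure μ)
    (hcoord : ∀ k, ∀ᵐ x ∂μ, x k ∈ Set.Icc 0 A)
    (hsum : (∑ k, ∫ x, x k ∂μ) ≤ α * A) :
    IsProbabilityMeasure (μ.map (fX h)) ∧
    (∀ᵐ t ∂(μ.map (fX h)), 0 ≤ t) ∧ (μ.map (fX h)) {x | sCum h n * A < x} = 0 ∧
    avgPowerUse h A (μ.map (fX h)) ≤ α * A := by
  haveI := hprob
  haveI : IsProbabilityMeasure (μ.map (fX h)) :=
    Measure.isProbabilityMeasure_map measurable_fX.aemeasurable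
  have hbox : ∀ᵐ x ∂μ, ∀ k, x k ∈ Set.Icc 0 A := ae_all_iff.mpr hcoord
  have hub : ∀ᵐ x ∂μ, fX h x ≤ sCum h n * A := by
    filter_upwards [hbox] with x hx
    rw [sCum_top, Finset.sum_mul]
    exact Finset.sum_le_sum fun k _ =>
      mul_le_mul_of_nonneg_left (hx k).2 (hpos k).le
  refine ⟨inferInstance, ?_, ?_, ?_⟩
  · have hmem : ∀ᵐ t ∂(μ.map (fX h)), t ∈ Set.Ici (0:ℝ) := by
      refine (MeasureTheory.ae_map_iff measurable_fX.aemeasurable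
        (p := fun t => t ∈ Set.Ici (0:ℝ)) measurableSet_Ici).mpr ?_
      filter_upwards [hbox] with x hx
      exact Finset.sum_nonneg fun k _ => mul_nonneg (hpos k).le (hx k).1
    filter_upwards [hmem] with t ht using ht
  · rw [Measure.map_apply measurable_fX (by exact measurableSet_Ioi)]
    have hset : (fX h) ⁻¹' {x | sCum h n * A < x} = {x | ¬ fX h x ≤ sCum h n * A} := by
      ext x; simp [not_le]
    rw [hset]
    exact ae_iff.mp hub
  · rw [avgPowerUse_eq_integral hpos hA _,
      integral_map measurable_fX.aemeasurable measurable_sumTmap.aestronglyMeasurable]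
    have hptw : ∀ᵐ x ∂μ, (∑ j, Tmap h A (fX h x) j) ≤ ∑ j, x j := by
      filter_upwards [hbox] with x hx
      by_cases hc : ∃ k, fX h x ∈ uInterval h A k
      · obtain ⟨k, hk⟩ := hc
        rw [Tmap_eq_pieceVec hpos hA hk, sum_pieceVec hpos]
        exact gFun_le hord hpos hA hx k
      · push_neg at hc
        rw [Tmap_eq_zero hc]
        simp only [Pi.zero_apply, Finset.sum_const_zero]
        exact Finset.sum_nonneg fun j _ => (hx j).1
    have hint1 : Integrable (fun x => ∑ j, Tmap h A (fX h x) j) μ := by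
      refine (integrable_const ((n : ℝ) * A)).mono'
        (measurable_sumTmap.comp measurable_fX).aestronglyMeasurable ?_
      refine Eventually.of_forall fun x => ?_
      rw [Real.norm_eq_abs, abs_of_nonneg (sumTmap_nonneg hpos hA _)]
      exact sumTmap_le hpos hA _
    have hintj : ∀ j : Fin n, Integrable (fun x : Fin n → ℝ => x j) μ := by
      intro j
      refine (integrable_const A).mono' (measurable_pi_apply j).aestronglyMeasurable ?_
      filter_upwards [hcoord j] with x hx
      rw [Real.norm_eq_abs, abs_of_nonneg hx.1]
      exact hx.2
    have hint2 : Integrable (fun x : Fin n → ℝ => ∑ j, x j) μ :=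
      integrable_finset_sum _ fun j _ => hintj j
    calc ∫ x, ∑ j, Tmap h A (fX h x) j ∂μ ≤ ∫ x, ∑ j, x j ∂μ :=
          integral_mono_ae hint1 hint2 hptw
      _ = ∑ j, ∫ x, x j ∂μ := integral_finset_sum _ fun j _ => hintj j
      _ ≤ α * A := hsum

lemma miso_feasible (hpos : ∀ k, 0 < h k) (hA : 0 < A) (hn : 0 < n) (ν : Measure ℝ)
    (hprob : IsProbabilityMeasure ν)
    (h0 : ∀ᵐ t ∂ν, 0 ≤ t) (htop : ν {x | sCum h n * A < x} = 0)
    (hpow : avgPowerUse h A ν ≤ α * A) :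
    IsProbabilityMeasure (ν.map (Tmap h A)) ∧
    (∀ k, ∀ᵐ x ∂(ν.map (Tmap h A)), x k ∈ Set.Icc 0 A) ∧
    (∑ k, ∫ x, x k ∂(ν.map (Tmap h A))) ≤ α * A ∧
    (ν.map (Tmap h A)).map (fX h) = ν := by
  haveI := hprob
  refine ⟨Measure.isProbabilityMeasure_map measurable_Tmap.aemeasurable, ?_, ?_, ?_⟩
  · intro k
    have hmem : ∀ᵐ x ∂(ν.map (Tmap h A)), x ∈ {x : Fin n → ℝ | x k ∈ Set.Icc 0 A} := by
      refine (MeasureTheory.ae_map_iff measurable_Tmap.aemeasurable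
        (p := fun x : Fin n → ℝ => x ∈ {x : Fin n → ℝ | x k ∈ Set.Icc 0 A})
        ((measurable_pi_apply k) measurableSet_Icc)).mpr ?_
      exact Eventually.of_forall fun t => Tmap_mem hpos hA t k
    filter_upwards [hmem] with x hx using hx
  · have heq : ∀ k : Fin n, ∫ x, x k ∂(ν.map (Tmap h A)) = ∫ t, Tmap h A t k ∂ν := fun k =>
      integral_map measurable_Tmap.aemeasurable (measurable_pi_apply k).aestronglyMeasurable
    rw [Finset.sum_congr rfl fun k _ => heq k,
      ← integral_finset_sum _ (fun k _ => integrable_Tmap_apply hpos hA ν k),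
      ← avgPowerUse_eq_integral hpos hA ν]
    exact hpow
  · rw [Measure.map_map measurable_fX measurable_Tmap]
    have hcompl : ∀ᵐ t ∂ν, ¬ (sCum h n * A < t) := by
      rw [ae_iff]
      simpa [not_not] using htop
    have hae : (fX h ∘ Tmap h A) =ᵐ[ν] id := by
      filter_upwards [h0, hcompl] with t ht1 ht2
      have hmem : t ∈ Set.Icc 0 (sCum h n * A) := ⟨ht1, not_lt.mp ht2⟩
      obtain ⟨k, hk⟩ := mem_uInterval_cover hpos hA hn hmem
      exact dot_Tmap hpos hA hk
    rw [Measure.map_congr hae, Measure.map_id]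

end Main

namespace Main

open Aux Aux2 Aux3

lemma miso_eq_siso {n : ℕ} {h : Fin n → ℝ} {v : ℝ≥0} (hv : v ≠ 0)
    (μ : Measure (Fin n → ℝ)) [IsProbabilityMeasure μ] :
    mutualInfo (misoJoint h v μ) = mutualInfo (sisoJoint v (μ.map (fX h))) := by
  have h1 : misoJoint h v μ = Aux2.jointM v μ (fX h) := rfl
  have h2 : sisoJoint v (μ.map (fX h)) = Aux2.jointM v (μ.map (fX h)) (id : ℝ → ℝ) := rfl
  rw [h1, h2]
  exact mutualInfo_jointM hv measurable_fX μ

end Main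

end

theorem miso_capacity_equiv_scalar (n : ℕ) (hn : 2 ≤ n) (h : Fin n → ℝ)
    (hord : ∀ i j : Fin n, i ≤ j → h j ≤ h i) (hpos : ∀ k, 0 < h k)
    (v : ℝ≥0) (hv : 0 < v)
    (A α : ℝ) (hA : 0 < A) (hα0 : 0 < α) (hα : α < (n : ℝ) / 2) :
    misoCapacity h v A (α * A)
      = ⨆ μ ∈ {μ : Measure ℝ | IsProbabilityMeasure μ ∧
          (∀ᵐ x ∂μ, 0 ≤ x) ∧ μ {x | sCum h n * A < x} = 0 ∧
          avgPowerUse h A μ ≤ α * A},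
        mutualInfo (sisoJoint v μ) := by
  classical
  have hv' : v ≠ 0 := hv.ne'
  have hn0 : 0 < n := by omega
  apply le_antisymm
  · rw [misoCapacity]
    refine iSup₂_le fun μ hμ => ?_
    obtain ⟨hprob, hcoord, hsum⟩ := hμ
    haveI := hprob
    obtain ⟨hp1, hp2, hp3, hp4⟩ := Main.siso_feasible hord hpos hA μ hprob hcoord hsum
    rw [Main.miso_eq_siso hv' μ]
    exact le_iSup₂_of_le (μ.map (Main.fX h)) ⟨hp1, hp2, hp3, hp4⟩ le_rfl
  · refine iSup₂_le fun ν hν => ?_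
    obtain ⟨hprob, h0, htop, hpow⟩ := hν
    haveI := hprob
    obtain ⟨hq1, hq2, hq3, hq4⟩ := Main.miso_feasible hpos hA hn0 ν hprob h0 htop hpow
    rw [misoCapacity]
    refine le_iSup₂_of_le (ν.map (Aux.Tmap h A)) ⟨hq1, hq2, hq3⟩ ?_
    haveI := hq1
    rw [Main.miso_eq_siso hv' (ν.map (Aux.Tmap h A)), hq4]
end

section
/- The maximum variance V_max(A, αA) is achieved by a law of X̄ supported on the finite set {0, s_1 A, s_2 A, …, s_n A}; that is, the supremum of Var(X̄) over all admissible laws equals the supremum over admissible laws supported on {0, s_1 A, …, s_n A}. -/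
open MeasureTheory ProbabilityTheory Real Filter
open scoped NNReal ENNReal Classical

noncomputable section

/-- A scalar law is admissible if it is a probability measure, is supported on
nonnegative reals, puts no mass above `s_n A`, and respects the average-power
constraint `αA`. -/
def scalarAdmissible {n : ℕ} (h : Fin n → ℝ) (A αA : ℝ) (μ : Measure ℝ) : Prop :=
  IsProbabilityMeasure μ ∧ (∀ᵐ x ∂μ, 0 ≤ x) ∧ μ {x | sCum h n * A < x} = 0 ∧
    avgPowerUse h A μ ≤ αA

/-- The maximum variance `V_max(A, αA)`. -/
def Vmax {n : ℕ} (h : Fin n → ℝ) (A αA : ℝ) : ℝ :=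
  sSup ((fun μ : Measure ℝ => variance id μ) '' {μ | scalarAdmissible h A αA μ})

end


section VmaxAux


variable {n : ℕ} {h : Fin n → ℝ} {A : ℝ}

lemma sCum_zero (h : Fin n → ℝ) : sCum h 0 = 0 := by simp [sCum]

lemma sCum_succ (h : Fin n → ℝ) {k : ℕ} (hk : k < n) :
    sCum h (k + 1) = sCum h k + h ⟨k, hk⟩ := by
  unfold sCum
  have key : ∀ i : Fin n, (if i.val < k + 1 then h i else 0)
      = (if i.val < k then h i else 0) + (if i = ⟨k, hk⟩ then h i else 0) := by
    intro i
    rcases lt_trichotomy i.val k with hc | hc | hc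
    · simp [hc, Nat.lt_succ_of_lt hc, Fin.ext_iff, hc.ne]
    · simp [hc, Fin.ext_iff, Nat.lt_succ_iff, le_of_eq hc]
    · have h1 : ¬ i.val < k + 1 := by omega
      have h2 : ¬ i.val < k := by omega
      have h3 : i.val ≠ k := by omega
      simp [h1, h2, Fin.ext_iff, h3]
  rw [Finset.sum_congr rfl (fun i _ => key i), Finset.sum_add_distrib]
  congr 1
  simp

lemma sCum_nonneg (hpos : ∀ k, 0 < h k) (m : ℕ) : 0 ≤ sCum h m :=
  Finset.sum_nonneg fun i _ => by split_ifs; exacts [(hpos i).le, le_refl 0]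

lemma sCum_mono (hpos : ∀ k, 0 < h k) : Monotone (sCum h) := by
  intro a b hab
  refine Finset.sum_le_sum fun i _ => ?_
  by_cases hia : i.val < a
  · rw [if_pos hia, if_pos (lt_of_lt_of_le hia hab)]
  · rw [if_neg hia]
    split_ifs
    · exact (hpos i).le
    · exact le_refl 0

lemma sCum_strictOn (hpos : ∀ k, 0 < h k) {i j : ℕ} (hij : i < j) (hj : j ≤ n) :
    sCum h i < sCum h j := by
  have hin : i < n := lt_of_lt_of_le hij hj
  calc sCum h i < sCum h (i + 1) := by
        rw [sCum_succ h hin]; linarith [hpos ⟨i, hin⟩]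
    _ ≤ sCum h j := sCum_mono hpos hij

lemma measurableSet_uInterval (j : Fin n) : MeasurableSet (uInterval h A j) := by
  unfold uInterval; split_ifs
  · exact measurableSet_Icc
  · exact measurableSet_Ioc

lemma mem_uInterval_iff (hpos : ∀ k, 0 < h k) (hA : 0 < A) {i : ℕ} (hi : i ≤ n)
    (j : Fin n) : sCum h i * A ∈ uInterval h A j ↔ j.val = i - 1 := by
  have hmono : ∀ {a b : ℕ}, a ≤ b → sCum h a * A ≤ sCum h b * A := fun hab =>
    mul_le_mul_of_nonneg_right (sCum_mono hpos hab) hA.le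
  have hstrict : ∀ {a b : ℕ}, a < b → b ≤ n → sCum h a * A < sCum h b * A := fun hab hb =>
    mul_lt_mul_of_pos_right (sCum_strictOn hpos hab hb) hA
  unfold uInterval
  split_ifs with hj0
  · simp only [Set.mem_Icc]
    constructor
    · rintro ⟨-, h2⟩
      by_contra hne
      have h2i : 2 ≤ i := by omega
      exact absurd h2 (not_le.mpr (hstrict (by omega) hi))
    · intro hji
      have hi1 : i ≤ 1 := by omega
      exact ⟨mul_nonneg (sCum_nonneg hpos i) hA.le, hmono hi1⟩
  · simp only [Set.mem_Ioc]
    constructor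
    · rintro ⟨h1, h2⟩
      have hji : j.val < i := by
        by_contra hc
        push_neg at hc
        exact absurd h1 (not_lt.mpr (hmono hc))
      have hij : i ≤ j.val + 1 := by
        by_contra hc
        push_neg at hc
        exact absurd h2 (not_le.mpr (hstrict hc hi))
      omega
    · intro hji
      have hieq : i = j.val + 1 := by omega
      subst hieq
      exact ⟨hstrict (Nat.lt_succ_self _) hi, le_refl _⟩

lemma uInterval_subset_Icc (hpos : ∀ k, 0 < h k) (j : Fin n) :
    uInterval h A j ⊆ Set.Icc (sCum h j.val * A) (sCum h (j.val + 1) * A) := by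
  unfold uInterval
  split_ifs with hj0
  · rw [hj0, sCum_zero, zero_mul]
  · exact Set.Ioc_subset_Icc_self

lemma uInterval_disjoint (hpos : ∀ k, 0 < h k) (hA : 0 < A) :
    Pairwise (Function.onFun Disjoint (uInterval h A)) := by
  have key : ∀ j j' : Fin n, j < j' → Disjoint (uInterval h A j) (uInterval h A j') := by
    intro j j' hlt
    rw [Set.disjoint_left]
    intro x hx hx'
    have h1 : x ≤ sCum h (j.val + 1) * A := ((uInterval_subset_Icc hpos j) hx).2
    have hj'0 : ¬ j'.val = 0 := by have := hlt; omega
    have h2 : sCum h j'.val * A < x := by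
      have : x ∈ Set.Ioc (sCum h j'.val * A) (sCum h (j'.val + 1) * A) := by
        rw [uInterval, if_neg hj'0] at hx'; exact hx'
      exact this.1
    have h3 : sCum h (j.val + 1) * A ≤ sCum h j'.val * A :=
      mul_le_mul_of_nonneg_right (sCum_mono hpos (by omega : j.val + 1 ≤ j'.val)) hA.le
    linarith
  intro j j' hne
  rcases lt_or_gt_of_ne hne with hlt | hlt
  · exact key _ _ hlt
  · exact (key _ _ hlt).symm

lemma Icc_subset_iUnion_uInterval (hpos : ∀ k, 0 < h k) (hA : 0 < A) (hn : 0 < n) :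
    Set.Icc 0 (sCum h n * A) ⊆ ⋃ j, uInterval h A j := by
  rintro x ⟨hx0, hxn⟩
  have key : ∀ i, i ≤ n → x ≤ sCum h i * A → x ∈ ⋃ j, uInterval h A j := by
    intro i
    induction i with
    | zero =>
      intro _ hx
      refine Set.mem_iUnion.mpr ⟨⟨0, hn⟩, ?_⟩
      rw [sCum_zero, zero_mul] at hx
      have hx' : x = 0 := le_antisymm hx hx0
      rw [uInterval, if_pos rfl]
      exact ⟨hx0, by rw [hx']; exact mul_nonneg (sCum_nonneg hpos 1) hA.le⟩
    | succ i ih =>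
      intro hin hx
      by_cases hc : x ≤ sCum h i * A
      · exact ih (by omega) hc
      · push_neg at hc
        refine Set.mem_iUnion.mpr ⟨⟨i, by omega⟩, ?_⟩
        unfold uInterval
        by_cases hi0 : i = 0
        · subst hi0
          rw [if_pos rfl]
          exact ⟨hx0, hx⟩
        · rw [if_neg hi0]
          exact ⟨hc, hx⟩
  exact key n le_rfl hxn

lemma sum_power_atom (hpos : ∀ k, 0 < h k) (hA : 0 < A) {i : ℕ} (hi : i ≤ n) (hn : 0 < n) :
    ∑ j : Fin n, (if sCum h i * A ∈ uInterval h A j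
        then (sCum h i * A - A * sCum h j.val) / h j + j.val * A else 0) = i * A := by
  have hj0 : i - 1 < n := by omega
  rw [Finset.sum_eq_single (⟨i - 1, hj0⟩ : Fin n)]
  · rw [if_pos ((mem_uInterval_iff hpos hA hi _).mpr rfl)]
    rcases Nat.eq_zero_or_pos i with h0 | h0
    · subst h0
      simp [sCum_zero]
    · have hi1 : i - 1 + 1 = i := by omega
      have hse : sCum h i = sCum h (i - 1) + h ⟨i - 1, hj0⟩ := by
        rw [← sCum_succ h hj0, hi1]
      rw [hse]
      have hne := (hpos ⟨i - 1, hj0⟩).ne'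
      have hrw : ((sCum h (i-1) + h ⟨i-1, hj0⟩) * A - A * sCum h (i-1)) = h ⟨i-1, hj0⟩ * A := by
        ring
      rw [hrw, mul_div_cancel_left₀ _ hne]
      simp only [Fin.val_mk, Nat.cast_sub h0]
      push_cast
      ring
  · intro j _ hjne
    rw [if_neg]
    intro hmem
    exact hjne (Fin.ext ((mem_uInterval_iff hpos hA hi j).mp hmem))
  · simp

end VmaxAux

section DiracAux

variable {ι : Type*} [Fintype ι]

lemma integrable_dirac_aux (f : ℝ → ℝ) (a : ℝ) : Integrable f (Measure.dirac a) := by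
  constructor
  · apply (stronglyMeasurable_const (b := f a)).aestronglyMeasurable.congr
    rw [Filter.EventuallyEq, MeasureTheory.ae_dirac_eq]
    exact Filter.eventually_pure.mpr rfl
  · simp [HasFiniteIntegral, lintegral_dirac]

lemma integral_twoPt (c d bp ap : ι → ℝ) (hc : ∀ k, 0 ≤ c k) (hd : ∀ k, 0 ≤ d k) (f : ℝ → ℝ) :
    ∫ x, f x ∂(∑ k : ι, (ENNReal.ofReal (c k) • Measure.dirac (bp k)
        + ENNReal.ofReal (d k) • Measure.dirac (ap k)))
      = ∑ k : ι, (c k * f (bp k) + d k * f (ap k)) := by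
  rw [integral_finset_sum_measure (fun k _ =>
    ((integrable_dirac_aux f _).smul_measure ENNReal.ofReal_ne_top).add_measure
      ((integrable_dirac_aux f _).smul_measure ENNReal.ofReal_ne_top))]
  refine Finset.sum_congr rfl fun k _ => ?_
  rw [integral_add_measure ((integrable_dirac_aux f _).smul_measure ENNReal.ofReal_ne_top)
      ((integrable_dirac_aux f _).smul_measure ENNReal.ofReal_ne_top),
    integral_smul_measure, integral_smul_measure, integral_dirac, integral_dirac,
    ENNReal.toReal_ofReal (hc k), ENNReal.toReal_ofReal (hd k)]
  simp [smul_eq_mul]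

lemma apply_twoPt (c d bp ap : ι → ℝ) (S : Set ℝ) :
    (∑ k : ι, (ENNReal.ofReal (c k) • Measure.dirac (bp k)
        + ENNReal.ofReal (d k) • Measure.dirac (ap k))) S
      = ∑ k : ι, (ENNReal.ofReal (c k) * S.indicator 1 (bp k)
        + ENNReal.ofReal (d k) * S.indicator 1 (ap k)) := by
  rw [Measure.finset_sum_apply]
  refine Finset.sum_congr rfl fun k _ => ?_
  rw [Measure.add_apply, Measure.smul_apply, Measure.smul_apply,
    Measure.dirac_apply, Measure.dirac_apply, smul_eq_mul, smul_eq_mul]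

lemma ae_twoPt (c d bp ap : ι → ℝ) (S : Set ℝ)
    (hb : ∀ k, bp k ∈ S) (ha : ∀ k, ap k ∈ S) :
    ∀ᵐ x ∂(∑ k : ι, (ENNReal.ofReal (c k) • Measure.dirac (bp k)
        + ENNReal.ofReal (d k) • Measure.dirac (ap k))), x ∈ S := by
  rw [ae_iff]
  have : {x : ℝ | ¬ x ∈ S} = Sᶜ := rfl
  rw [this, apply_twoPt]
  refine Finset.sum_eq_zero fun k _ => ?_
  rw [Set.indicator_of_notMem (by simp [hb k]), Set.indicator_of_notMem (by simp [ha k])]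
  simp

end DiracAux
section MainAux

open MeasureTheory

lemma exists_nu {n : ℕ} (hn : 2 ≤ n) (h : Fin n → ℝ)
    (hpos : ∀ k, 0 < h k) (A αA : ℝ) (hA : 0 < A)
    (μ : Measure ℝ) (hμ : scalarAdmissible h A αA μ) :
    ∃ ν : Measure ℝ, scalarAdmissible h A αA ν ∧
      (∀ᵐ x ∂ν, x ∈ Set.range (fun k : Fin (n + 1) => sCum h k.val * A)) ∧
      variance id μ ≤ variance id ν := by
  obtain ⟨hprob, hae0, htop, hpow⟩ := hμ
  haveI := hprob
  set M : ℝ := sCum h n * A with hM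
  have hM0 : 0 ≤ M := mul_nonneg (sCum_nonneg hpos n) hA.le
  have haeM : ∀ᵐ x ∂μ, x ≤ M := by
    rw [ae_iff]
    convert htop using 2
    ext x
    simp [not_le]
  -- square-integrability of id under μ
  have hmem2 : MemLp id 2 μ := by
    refine MemLp.of_bound aestronglyMeasurable_id M ?_
    filter_upwards [hae0, haeM] with x h0 hMx
    rw [id, Real.norm_eq_abs, abs_le]
    exact ⟨by linarith, hMx⟩
  have hint1 : Integrable (fun x : ℝ => x) μ := by
    have := hmem2.integrable (by norm_num : (1:ℝ≥0∞) ≤ 2)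
    exact this
  have hint2 : Integrable (fun x : ℝ => x^2) μ := by
    have := hmem2.integrable_sq
    simpa using this
  -- interval data
  set I : Fin n → Set ℝ := uInterval h A with hIdef
  set t : ℕ → ℝ := fun i => sCum h i * A with ht
  set p : Fin n → ℝ := fun k => (μ (I k)).toReal with hpdef
  set m : Fin n → ℝ := fun k => ∫ x in I k, x ∂μ with hmdef
  set c : Fin n → ℝ := fun k => (m k - t k.val * p k) / (h k * A) with hcdef
  set d : Fin n → ℝ := fun k => p k - c k with hddef
  set ν : Measure ℝ := ∑ k : Fin n, (ENNReal.ofReal (c k) • Measure.dirac (t (k.val + 1))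
      + ENNReal.ofReal (d k) • Measure.dirac (t k.val)) with hνdef
  have hIk : ∀ k : Fin n, I k ⊆ Set.Icc (t k.val) (t (k.val + 1)) :=
    fun k => uInterval_subset_Icc hpos k
  have hImeas : ∀ k : Fin n, MeasurableSet (I k) := fun k => measurableSet_uInterval k
  have htdiff : ∀ k : Fin n, t (k.val + 1) = t k.val + h k * A := by
    intro k
    show sCum h (k.val + 1) * A = sCum h k.val * A + h k * A
    rw [sCum_succ h k.isLt, Fin.eta]
    ring
  have hhA : ∀ k : Fin n, 0 < h k * A := fun k => mul_pos (hpos k) hA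
  have hp0 : ∀ k, 0 ≤ p k := fun k => ENNReal.toReal_nonneg
  -- bounds on m
  have hm_low : ∀ k, t k.val * p k ≤ m k := by
    intro k
    have h1 : ∫ x in I k, t k.val ∂μ = t k.val * p k := by
      rw [setIntegral_const]; simp [hpdef, mul_comm, Measure.real]
    rw [← h1]
    exact setIntegral_mono_on (integrableOn_const (measure_ne_top μ _))
      hint1.integrableOn (hImeas k) (fun x hx => (hIk k hx).1)
  have hm_high : ∀ k, m k ≤ t (k.val + 1) * p k := by
    intro k
    have h1 : ∫ x in I k, t (k.val + 1) ∂μ = t (k.val + 1) * p k := by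
      rw [setIntegral_const]; simp [hpdef, mul_comm, Measure.real]
    rw [← h1]
    exact setIntegral_mono_on hint1.integrableOn
      (integrableOn_const (measure_ne_top μ _)) (hImeas k)
      (fun x hx => (hIk k hx).2)
  have hc_mul : ∀ k, c k * (h k * A) = m k - t k.val * p k := by
    intro k
    rw [hcdef]
    exact div_mul_cancel₀ _ (hhA k).ne'
  have hc0 : ∀ k, 0 ≤ c k := by
    intro k
    apply div_nonneg _ (hhA k).le
    linarith [hm_low k]
  have hd0 : ∀ k, 0 ≤ d k := by
    intro k
    have h1 : c k ≤ p k := by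
      rw [hcdef, div_le_iff₀ (hhA k)]
      have := hm_high k
      rw [htdiff k] at this
      nlinarith
    simp only [hddef]
    linarith
  have hcd : ∀ k, c k + d k = p k := fun k => by simp [hddef]
  have hmean_k : ∀ k, c k * t (k.val + 1) + d k * t k.val = m k := by
    intro k
    rw [htdiff k, hddef]
    linear_combination hc_mul k
  -- second moment bound
  have hq_le : ∀ k, (∫ x in I k, x ^ 2 ∂μ) ≤ c k * (t (k.val + 1)) ^ 2 + d k * (t k.val) ^ 2 := by
    intro k
    have hrhs : c k * (t (k.val + 1)) ^ 2 + d k * (t k.val) ^ 2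
        = (t k.val + t (k.val + 1)) * m k - t k.val * t (k.val + 1) * p k := by
      rw [htdiff k, hddef]
      linear_combination (2 * t k.val + h k * A) * hc_mul k
    rw [hrhs]
    have hlin : ∫ x in I k, ((t k.val + t (k.val + 1)) * x - t k.val * t (k.val + 1)) ∂μ
        = (t k.val + t (k.val + 1)) * m k - t k.val * t (k.val + 1) * p k := by
      rw [integral_sub (hint1.integrableOn.const_mul _) (integrableOn_const (measure_ne_top μ _)),
        integral_const_mul, setIntegral_const]
      simp [hpdef, hmdef, Measure.real]
      ring
    rw [← hlin]
    refine setIntegral_mono_on (hint2.integrableOn)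
      ((hint1.integrableOn.const_mul _).sub (integrableOn_const (measure_ne_top μ _)))
      (hImeas k) (fun x hx => ?_)
    have h1 := (hIk k hx).1
    have h2 := (hIk k hx).2
    nlinarith [mul_nonneg (sub_nonneg.mpr h1) (sub_nonneg.mpr h2)]
  -- totals over the partition
  have hUae : ∀ᵐ x ∂μ, x ∈ ⋃ j, I j := by
    filter_upwards [hae0, haeM] with x h0 hMx
    exact Icc_subset_iUnion_uInterval hpos hA (by omega) ⟨h0, hMx⟩
  have hrestrU : μ.restrict (⋃ j, I j) = μ := Measure.restrict_eq_self_of_ae_mem hUae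
  have hsum_restrict : ∀ f : ℝ → ℝ, Integrable f μ →
      ∑ k : Fin n, ∫ x in I k, f x ∂μ = ∫ x, f x ∂μ := by
    intro f hf
    have h1 := integral_iUnion hImeas (uInterval_disjoint hpos hA) hf.integrableOn
    rw [tsum_fintype] at h1
    rw [show (∫ x in ⋃ j, I j, f x ∂μ) = ∫ x, f x ∂μ by rw [hrestrU]] at h1
    exact h1.symm
  have hsum_p : ∑ k, p k = 1 := by
    have hU : μ (⋃ j, I j) = 1 := by
      have h2 : μ (⋃ j, I j)ᶜ = 0 := by
        have h2' := ae_iff.mp hUae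
        simpa [Set.compl_def] using h2'
      have h3 := measure_add_measure_compl (μ := μ) (MeasurableSet.iUnion hImeas)
      rw [h2, add_zero, measure_univ] at h3
      exact h3
    have h4 : μ (⋃ j, I j) = ∑ k, μ (I k) := by
      rw [measure_iUnion (uInterval_disjoint hpos hA) hImeas, tsum_fintype]
    rw [h4] at hU
    have h5 := congrArg ENNReal.toReal hU
    rw [ENNReal.toReal_sum (fun k _ => measure_ne_top μ _)] at h5
    simpa [hpdef] using h5
  have hsum_m : ∑ k, m k = ∫ x, x ∂μ := hsum_restrict _ hint1
  have hsum_q : ∑ k, ∫ x in I k, x ^ 2 ∂μ = ∫ x, x ^ 2 ∂μ := hsum_restrict _ hint2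
  -- basic facts about ν
  have hνint : ∀ f : ℝ → ℝ, ∫ x, f x ∂ν
      = ∑ k : Fin n, (c k * f (t (k.val + 1)) + d k * f (t k.val)) := by
    intro f
    rw [hνdef]
    exact integral_twoPt c d _ _ hc0 hd0 f
  have hνprob : IsProbabilityMeasure ν := by
    constructor
    rw [hνdef, apply_twoPt]
    have : ∀ k : Fin n, ENNReal.ofReal (c k) * Set.indicator Set.univ 1 (t (k.val + 1))
        + ENNReal.ofReal (d k) * Set.indicator Set.univ 1 (t k.val)
        = ENNReal.ofReal (p k) := by
      intro k
      simp only [Set.indicator_univ, Pi.one_apply, mul_one]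
      rw [← ENNReal.ofReal_add (hc0 k) (hd0 k), hcd k]
    rw [Finset.sum_congr rfl (fun k _ => this k),
      ← ENNReal.ofReal_sum_of_nonneg (fun k _ => hp0 k), hsum_p]
    simp
  haveI := hνprob
  have hνS : ∀ S : Set ℝ, (∀ i : ℕ, i ≤ n → t i ∈ S) → ∀ᵐ x ∂ν, x ∈ S := by
    intro S hS
    rw [hνdef]
    exact ae_twoPt c d _ _ S (fun k => hS _ (by omega)) (fun k => hS _ (by omega))
  have hνae0 : ∀ᵐ x ∂ν, (0:ℝ) ≤ x := by
    have := hνS {x | 0 ≤ x} (fun i _ => mul_nonneg (sCum_nonneg hpos i) hA.le)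
    simpa using this
  have hνtop : ν {x | M < x} = 0 := by
    have h1 : ∀ᵐ x ∂ν, x ∈ {x : ℝ | x ≤ M} := by
      refine hνS _ (fun i hi => ?_)
      exact mul_le_mul_of_nonneg_right (sCum_mono hpos hi) hA.le
    rw [ae_iff] at h1
    convert h1 using 2
    ext x
    simp [not_le]
  have hνrange : ∀ᵐ x ∂ν, x ∈ Set.range (fun k : Fin (n + 1) => sCum h k.val * A) := by
    refine hνS _ (fun i hi => ⟨⟨i, by omega⟩, rfl⟩)
  -- power use of ν equals power use of μ
  have hres : ∀ (S : Set ℝ), MeasurableSet S → ∀ f : ℝ → ℝ,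
      ∫ x in S, f x ∂ν = ∑ k : Fin n, ((if t (k.val + 1) ∈ S then c k * f (t (k.val + 1)) else 0)
        + (if t k.val ∈ S then d k * f (t k.val) else 0)) := by
    intro S hS f
    rw [← integral_indicator hS, hνint]
    refine Finset.sum_congr rfl fun k _ => ?_
    by_cases h1 : t (k.val + 1) ∈ S <;> by_cases h2 : t k.val ∈ S <;>
      simp [Set.indicator_of_mem, Set.indicator_of_notMem, h1, h2]
  have hresmeas : ∀ (S : Set ℝ), MeasurableSet S →
      (ν S).toReal = ∑ k : Fin n, ((if t (k.val + 1) ∈ S then c k else 0)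
        + (if t k.val ∈ S then d k else 0)) := by
    intro S hS
    have h1 : (ν S).toReal = ∫ x in S, (1:ℝ) ∂ν := by
      rw [setIntegral_const]; simp [Measure.real]
    rw [h1, hres S hS (fun _ => 1)]
    refine Finset.sum_congr rfl fun k _ => ?_
    split_ifs <;> simp
  have hpow_eq : avgPowerUse h A ν = avgPowerUse h A μ := by
    have step1 : avgPowerUse h A ν = ∑ j : Fin n, ∑ k : Fin n,
        ((if t (k.val + 1) ∈ I j then c k * ((t (k.val + 1) - A * sCum h j.val) / h j + j.val * A) else 0)
          + (if t k.val ∈ I j then d k * ((t k.val - A * sCum h j.val) / h j + j.val * A) else 0)) := by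
      unfold avgPowerUse
      refine Finset.sum_congr rfl fun j _ => ?_
      rw [hres (I j) (hImeas j) (fun x => x), hresmeas (I j) (hImeas j)]
      have hgen : ∀ (X Y : Fin n → ℝ),
          ((∑ k, X k) - A * sCum h j.val * (∑ k, Y k)) / h j + j.val * A * (∑ k, Y k)
            = ∑ k, ((X k - A * sCum h j.val * Y k) / h j + j.val * A * Y k) := by
        intro X Y
        rw [Finset.mul_sum, Finset.mul_sum, ← Finset.sum_sub_distrib, Finset.sum_div,
          ← Finset.sum_add_distrib]
      rw [hgen]
      refine Finset.sum_congr rfl fun k _ => ?_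
      split_ifs <;> ring
    have hpull : ∀ (r : ℝ) (i : ℕ), i ≤ n →
        ∑ j : Fin n, (if t i ∈ I j then r * ((t i - A * sCum h j.val) / h j + j.val * A) else 0)
          = r * (i * A) := by
      intro r i hi
      rw [← sum_power_atom hpos hA hi (by omega : 0 < n), Finset.mul_sum]
      refine Finset.sum_congr rfl fun j _ => ?_
      split_ifs <;> simp [ht]
    rw [step1, Finset.sum_comm]
    unfold avgPowerUse
    refine Finset.sum_congr rfl fun k _ => ?_
    rw [Finset.sum_add_distrib, hpull (c k) (k.val + 1) (by omega), hpull (d k) k.val (by omega)]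
    have hcA : c k * A = (m k - A * sCum h k.val * p k) / h k := by
      rw [eq_div_iff (hpos k).ne']
      linear_combination hc_mul k
    have hd' : d k = p k - c k := rfl
    push_cast
    linear_combination hcA + (k.val : ℝ) * A * hd'
  -- variance comparison
  have hνmem2 : MemLp id 2 ν := by
    refine MemLp.of_bound aestronglyMeasurable_id M ?_
    have hb := hνS {x : ℝ | x ∈ Set.Icc 0 M} (fun i hi =>
      ⟨mul_nonneg (sCum_nonneg hpos i) hA.le,
        mul_le_mul_of_nonneg_right (sCum_mono hpos hi) hA.le⟩)
    filter_upwards [hb] with x hx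
    rw [id, Real.norm_eq_abs, abs_le]
    exact ⟨by linarith [hx.1], hx.2⟩
  have hmeanν : ∫ x, x ∂ν = ∫ x, x ∂μ := by
    rw [hνint (fun x => x), ← hsum_m]
    exact Finset.sum_congr rfl fun k _ => hmean_k k
  have hsqν : ∫ x, x ^ 2 ∂μ ≤ ∫ x, x ^ 2 ∂ν := by
    rw [hνint (fun x => x ^ 2), ← hsum_q]
    exact Finset.sum_le_sum fun k _ => hq_le k
  have hvar : variance id μ ≤ variance id ν := by
    have h1 : variance id μ = (∫ x, x ^ 2 ∂μ) - (∫ x, x ∂μ) ^ 2 := by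
      have := variance_eq_sub hmem2
      simpa [Pi.pow_apply] using this
    have h2 : variance id ν = (∫ x, x ^ 2 ∂ν) - (∫ x, x ∂ν) ^ 2 := by
      have := variance_eq_sub hνmem2
      simpa [Pi.pow_apply] using this
    rw [h1, h2, hmeanν]
    linarith
  exact ⟨ν, ⟨hνprob, hνae0, hνtop, by rw [hpow_eq]; exact hpow⟩, hνrange, hvar⟩

end MainAux
theorem max_variance_achieved_on_finite_support (n : ℕ) (hn : 2 ≤ n) (h : Fin n → ℝ)
    (hord : ∀ i j : Fin n, i ≤ j → h j ≤ h i) (hpos : ∀ k, 0 < h k)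
    (A α : ℝ) (hA : 0 < A) (hα0 : 0 < α) (hαn : α < (n : ℝ) / 2) :
    Vmax h A (α * A)
      = sSup ((fun μ : Measure ℝ => variance id μ) ''
          {μ | scalarAdmissible h A (α * A) μ ∧
            ∀ᵐ x ∂μ, x ∈ Set.range (fun k : Fin (n + 1) => sCum h k.val * A)}) := by
  classical
  have hMpos : 0 < sCum h n * A := by
    have h1 := sCum_strictOn hpos (show 0 < n by omega) le_rfl
    rw [sCum_zero] at h1
    exact mul_pos h1 hA
  -- variance bound for admissible laws
  have hvb : ∀ μ : Measure ℝ, scalarAdmissible h A (α * A) μ →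
      variance id μ ≤ (sCum h n * A) ^ 2 := by
    intro μ hμ
    obtain ⟨hprob, hae0, htop, -⟩ := hμ
    haveI := hprob
    have haeM : ∀ᵐ x ∂μ, x ≤ sCum h n * A := by
      rw [ae_iff]
      convert htop using 2
      ext x
      simp [not_le]
    have hmem2 : MeasureTheory.MemLp id 2 μ := by
      refine MeasureTheory.MemLp.of_bound aestronglyMeasurable_id (sCum h n * A) ?_
      filter_upwards [hae0, haeM] with x h0 hMx
      rw [id, Real.norm_eq_abs, abs_le]
      exact ⟨by linarith, hMx⟩
    have h1 : variance id μ = (∫ x, x ^ 2 ∂μ) - (∫ x, x ∂μ) ^ 2 := by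
      have := variance_eq_sub hmem2
      simpa [Pi.pow_apply] using this
    have hsq : ∫ x, x ^ 2 ∂μ ≤ (sCum h n * A) ^ 2 := by
      have h2 : ∫ x, x ^ 2 ∂μ ≤ ∫ _, (sCum h n * A) ^ 2 ∂μ := by
        refine integral_mono_ae (by simpa using hmem2.integrable_sq)
          (integrable_const _) ?_
        filter_upwards [hae0, haeM] with x h0 hMx
        nlinarith
      simpa using h2
    rw [h1]
    nlinarith [sq_nonneg (∫ x, x ∂μ)]
  -- the Dirac mass at 0 is admissible with finite support
  have hzmem : (0:ℝ) ∈ Set.range (fun k : Fin (n + 1) => sCum h k.val * A) :=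
    ⟨⟨0, by omega⟩, by simp [sCum_zero]⟩
  have hdadm : scalarAdmissible h A (α * A) (Measure.dirac 0) := by
    refine ⟨inferInstance, ?_, ?_, ?_⟩
    · rw [MeasureTheory.ae_dirac_eq]
      exact Filter.eventually_pure.mpr le_rfl
    · rw [Measure.dirac_apply]
      rw [Set.indicator_of_notMem (by simp; linarith)]
    · have hzero : avgPowerUse h A (Measure.dirac 0) = 0 := by
        unfold avgPowerUse
        refine Finset.sum_eq_zero fun j _ => ?_
        by_cases hj : (0:ℝ) ∈ uInterval h A j
        · have hj0 : j.val = 0 := by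
            have h0A : (0:ℝ) = sCum h 0 * A := by simp [sCum_zero]
            have := (mem_uInterval_iff hpos hA (show 0 ≤ n by omega) j).mp (by rwa [← h0A])
            omega
          have hr : (Measure.dirac (0:ℝ)).restrict (uInterval h A j) = Measure.dirac 0 := by
            rw [restrict_dirac]
            simp [hj]
          have hμj : (Measure.dirac (0:ℝ)) (uInterval h A j) = 1 :=
            Measure.dirac_apply_of_mem hj
          have hint : (∫ x in uInterval h A j, x ∂(Measure.dirac (0:ℝ))) = 0 := by
            rw [hr]
            simpa using integral_dirac (fun x : ℝ => x) 0
          rw [hint, hμj, hj0, sCum_zero]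
          simp
        · have hμj : (Measure.dirac (0:ℝ)) (uInterval h A j) = 0 := by
            rw [Measure.dirac_apply]
            exact Set.indicator_of_notMem hj _
          have hr : (Measure.dirac (0:ℝ)).restrict (uInterval h A j) = 0 := by
            rw [restrict_dirac]
            simp [hj]
          have hint : (∫ x in uInterval h A j, x ∂(Measure.dirac (0:ℝ))) = 0 := by
            rw [hr]
            simp
          rw [hint, hμj]
          simp
      rw [hzero]
      positivity
  have hdrange : ∀ᵐ x ∂(Measure.dirac (0:ℝ)),
      x ∈ Set.range (fun k : Fin (n + 1) => sCum h k.val * A) := by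
    rw [MeasureTheory.ae_dirac_eq]
    exact Filter.eventually_pure.mpr hzmem
  -- assembling the sSup equality
  have hsub : ((fun μ : Measure ℝ => variance id μ) ''
        {μ | scalarAdmissible h A (α * A) μ ∧
          ∀ᵐ x ∂μ, x ∈ Set.range (fun k : Fin (n + 1) => sCum h k.val * A)})
      ⊆ ((fun μ : Measure ℝ => variance id μ) '' {μ | scalarAdmissible h A (α * A) μ}) :=
    Set.image_mono (fun μ hμ => hμ.1)
  have hS2ne : ((fun μ : Measure ℝ => variance id μ) ''
      {μ | scalarAdmissible h A (α * A) μ ∧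
        ∀ᵐ x ∂μ, x ∈ Set.range (fun k : Fin (n + 1) => sCum h k.val * A)}).Nonempty :=
    ⟨variance id (Measure.dirac 0), ⟨Measure.dirac 0, ⟨hdadm, hdrange⟩, rfl⟩⟩
  have hS1ne := hS2ne.mono hsub
  have hbdd1 : BddAbove ((fun μ : Measure ℝ => variance id μ) ''
      {μ | scalarAdmissible h A (α * A) μ}) := by
    refine ⟨(sCum h n * A) ^ 2, ?_⟩
    rintro v ⟨μ, hμ, rfl⟩
    exact hvb μ hμ
  have hbdd2 := hbdd1.mono hsub
  unfold Vmax
  apply le_antisymm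
  · refine csSup_le hS1ne ?_
    rintro v ⟨μ, hμ, rfl⟩
    obtain ⟨ν, hν, hνrange, hvar⟩ := exists_nu hn h hpos A (α * A) hA μ hμ
    exact le_trans hvar (le_csSup hbdd2 ⟨ν, ⟨hν, hνrange⟩, rfl⟩)
  · exact csSup_le_csSup hbdd1 hS2ne hsub
end
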